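/- arXiv:2003.02073 — 4 statements merged into one kernel-verified Lean document; each statement's English description precedes it below -/
import Mathlib

section
/- Let μ be a Borel probability measure on ℝ and ν a Borel measure on ℝ with ν({0}) = 0, ν((−∞,−1)) = 0 and ∫ min(1, y²) ν(dy) < ∞. Define S(z) = ∫_{[−1,z−1]} (z − 1 − y) ν(dy) for 0 ≤ z < 1, S(1) = 0, and S(z) = ∫_{[z−1,∞)∩[−1,1]} (y − z + 1) ν(dy) for z > 1. Then the function r(z) = 1_{z>0} ∫_{(0,∞)} x S(z/x) μ(dx) + 1_{z<0} ∫_{(−∞,0)} |x| S(z/x) μ(dx) is locally Lebesgue integrable on ℝ, i.e. ∫_K r(z) dz < ∞ for every compact set K ⊂ ℝ; equivalently, ρ(dz) = r(z) dz defines a locally finite Borel measure on ℝ. -/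
open MeasureTheory Set Filter

noncomputable section

namespace KEF

def IsLevyMeasure (ν : Measure ℝ) : Prop :=
  ν {0} = 0 ∧ ∫⁻ y, ENNReal.ofReal (min 1 (y ^ 2)) ∂ν < ⊤

/-- The generator `A` of the killed generalized OU process, expressed through the
Lévy triplets `(ση2, νη, γη)` of `η` and `(σU2, νU, γU)` of `Ũ`. -/
def levyGen (ση2 γη σU2 γU : ℝ) (νη νU : Measure ℝ) (f : ℝ → ℝ) (x : ℝ) : ℝ :=
  γη * deriv f x + ση2 / 2 * deriv (deriv f) x
    + (∫ y, (f (x + y) - f x - (if |y| ≤ 1 then y * deriv f x else 0)) ∂νη)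
    + γU * (x * deriv f x) + σU2 / 2 * (x ^ 2 * deriv (deriv f) x)
    + ∫ y in Ici (-1 : ℝ), (f (x + x * y) - f x - (if |y| ≤ 1 then x * y * deriv f x else 0)) ∂νU

/-- `μ` is invariant for the generator: `∫ Af dμ = 0` for all test functions `f`. -/
def Invariant (ση2 γη σU2 γU : ℝ) (νη νU : Measure ℝ) (μ : Measure ℝ) : Prop :=
  ∀ f : ℝ → ℝ, ContDiff ℝ (⊤ : ℕ∞) f → HasCompactSupport f →
    ∫ x, levyGen ση2 γη σU2 γU νη νU f x ∂μ = 0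

def Bmap (ν : Measure ℝ) (z : ℝ) : ℝ :=
  if 0 < z then (ν (Ioi (max z 1))).toReal
  else if z < 0 then -((ν (Iio (min z (-1)))).toReal)
  else 0

def BUmap (ν : Measure ℝ) (z : ℝ) : ℝ :=
  if 1 < z then (ν (Ioi (max (z - 1) 1))).toReal else 0

def Smap (ν : Measure ℝ) (z : ℝ) : ℝ :=
  if 0 < z then ∫ y in Ici z ∩ Icc (-1 : ℝ) 1, (y - z) ∂ν
  else if z < 0 then ∫ y in Iic z ∩ Icc (-1 : ℝ) 1, (z - y) ∂ν
  else 0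

def SUmap (ν : Measure ℝ) (z : ℝ) : ℝ :=
  if 0 ≤ z ∧ z < 1 then ∫ y in Icc (-1 : ℝ) (z - 1), (z - 1 - y) ∂ν
  else if 1 < z then ∫ y in Ici (z - 1) ∩ Icc (-1 : ℝ) 1, (y - z + 1) ∂ν
  else 0

/-- convolution of a function with a measure -/
def convM (g : ℝ → ℝ) (μ : Measure ℝ) (z : ℝ) : ℝ := ∫ x, g (z - x) ∂μ

def rmu (νU : Measure ℝ) (μ : Measure ℝ) (z : ℝ) : ℝ :=
  if 0 < z then ∫ x in Ioi (0 : ℝ), x * SUmap νU (z / x) ∂μ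
  else if z < 0 then ∫ x in Iio (0 : ℝ), |x| * SUmap νU (z / x) ∂μ
  else 0

def kmu (νU : Measure ℝ) (μ : Measure ℝ) (t : ℝ) : ℝ :=
  if 0 < t then ∫ x in Ioc (0 : ℝ) t, BUmap νU (t / x) ∂μ
  else if t < 0 then -∫ x in Ico t (0 : ℝ), BUmap νU (t / x) ∂μ
  else 0

def Dmu (γη γU : ℝ) (μ : Measure ℝ) (z : ℝ) : ℝ :=
  if 0 ≤ z then ∫ x in Ioc (0 : ℝ) z, (γη + x * γU) ∂μ
  else -∫ x in Ioc z (0 : ℝ), (γη + x * γU) ∂μ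

end KEF

open KEF
open scoped ENNReal

namespace Aux1

def g1 (ν : Measure ℝ) (w : ℝ) : ℝ≥0∞ := ∫⁻ y in Ici (-1:ℝ), ENNReal.ofReal (w - 1 - y) ∂ν

def g2 (ν : Measure ℝ) (w : ℝ) : ℝ≥0∞ := ∫⁻ y in Icc (-1:ℝ) 1, ENNReal.ofReal (y - w + 1) ∂ν

def g (ν : Measure ℝ) (w : ℝ) : ℝ≥0∞ :=
  (Ico (0:ℝ) 1).indicator (g1 ν) w + (Ioi (1:ℝ)).indicator (g2 ν) w

lemma g1_mono (ν : Measure ℝ) : Monotone (g1 ν) := by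
  intro a b hab
  exact lintegral_mono fun y => ENNReal.ofReal_le_ofReal (by linarith)

lemma g2_anti (ν : Measure ℝ) : Antitone (g2 ν) := by
  intro a b hab
  exact lintegral_mono fun y => ENNReal.ofReal_le_ofReal (by linarith)

lemma g_measurable (ν : Measure ℝ) : Measurable (g ν) :=
  (((g1_mono ν).measurable).indicator measurableSet_Ico).add
    (((g2_anti ν).measurable).indicator measurableSet_Ioi)

/-- `ofReal (SUmap ν w) ≤ g ν w`. -/
lemma ofReal_SUmap_le (ν : Measure ℝ) (w : ℝ) :
    ENNReal.ofReal (SUmap ν w) ≤ g ν w := by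
  unfold SUmap g
  split_ifs with h1 h2
  · -- 0 ≤ w < 1
    rw [indicator_of_mem (by exact ⟨h1.1, h1.2⟩), indicator_of_notMem (by simp; linarith [h1.2])]
    rw [add_zero]
    by_cases hi : Integrable (fun y => w - 1 - y) (ν.restrict (Icc (-1:ℝ) (w-1)))
    · rw [ofReal_integral_eq_lintegral_ofReal hi ?_]
      · exact lintegral_mono_set (Icc_subset_Ici_self)
      · filter_upwards [ae_restrict_mem measurableSet_Icc] with y hy
        simp only [Pi.zero_apply]; linarith [hy.2]
    · rw [integral_undef hi]; simp
  · -- 1 < w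
    rw [indicator_of_notMem (by simp; intro h; linarith), indicator_of_mem (show w ∈ Ioi 1 from h2), zero_add]
    by_cases hi : Integrable (fun y => y - w + 1)
        (ν.restrict (Ici (w-1) ∩ Icc (-1:ℝ) 1))
    · rw [ofReal_integral_eq_lintegral_ofReal hi ?_]
      · exact lintegral_mono_set (inter_subset_right)
      · filter_upwards [ae_restrict_mem ((measurableSet_Ici.inter measurableSet_Icc))]
          with y hy
        simp only [Pi.zero_apply]; linarith [mem_Ici.mp hy.1]
    · rw [integral_undef hi]; simp
  · simp

end Aux1
namespace Aux1

lemma markov (ν : Measure ℝ) (hνint : ∫⁻ y, ENNReal.ofReal (min 1 (y ^ 2)) ∂ν < ⊤)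
    {c : ℝ} (hc : 0 < c) : ν {y : ℝ | c ≤ min 1 (y ^ 2)} < ⊤ := by
  have hmeas : Measurable fun y : ℝ => ENNReal.ofReal (min 1 (y ^ 2)) :=
    (continuous_const.min (continuous_pow 2)).measurable.ennreal_ofReal
  have hset : {y : ℝ | c ≤ min 1 (y ^ 2)}
      = {y : ℝ | ENNReal.ofReal c ≤ ENNReal.ofReal (min 1 (y ^ 2))} := by
    ext y
    simp only [mem_setOf_eq]
    rw [ENNReal.ofReal_le_ofReal_iff (le_min zero_le_one (sq_nonneg y))]
  rw [hset]
  refine lt_of_le_of_lt (meas_ge_le_lintegral_div hmeas.aemeasurable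
    (by simpa using hc) ENNReal.ofReal_ne_top) ?_
  exact ENNReal.div_lt_top hνint.ne (by simpa using hc)

lemma sigmaFinite_of_levy (ν : Measure ℝ) (hν0 : ν {0} = 0)
    (hνint : ∫⁻ y, ENNReal.ofReal (min 1 (y ^ 2)) ∂ν < ⊤) : SigmaFinite ν := by
  refine ⟨⟨⟨fun n => {y : ℝ | 1 / (n + 1) ≤ min 1 (y ^ 2)} ∪ {0}, fun _ => trivial,
    fun n => ?_, ?_⟩⟩⟩
  · refine lt_of_le_of_lt (measure_union_le _ _) ?_
    rw [hν0, add_zero]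
    exact markov ν hνint (by positivity)
  · ext y
    simp only [mem_iUnion, mem_union, mem_setOf_eq, mem_singleton_iff, mem_univ, iff_true]
    by_cases hy : y = 0
    · exact ⟨0, Or.inr hy⟩
    · obtain ⟨n, hn⟩ := exists_nat_one_div_lt (show 0 < min 1 (y ^ 2) by
        refine lt_min one_pos ?_
        positivity)
      exact ⟨n, Or.inl (by exact_mod_cast hn.le)⟩

lemma g_eq_zero_of_notmem (ν : Measure ℝ) {w : ℝ} (hw : w ∉ Icc (0:ℝ) 2) : g ν w = 0 := by
  simp only [mem_Icc, not_and_or, not_le] at hw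
  rcases hw with hw | hw
  · unfold g
    rw [indicator_of_notMem (fun h => absurd h.1 (not_le.mpr hw)),
      indicator_of_notMem (fun h => absurd (mem_Ioi.mp h) (by linarith)), add_zero]
  · unfold g
    rw [indicator_of_notMem (by simp; intro h; linarith), zero_add,
      indicator_of_mem (show w ∈ Ioi 1 by simp; linarith)]
    unfold g2
    have : ∀ y ∈ Icc (-1:ℝ) 1, ENNReal.ofReal (y - w + 1) ≤ (0:ℝ≥0∞) := by
      intro y hy
      simp only [nonpos_iff_eq_zero, ENNReal.ofReal_eq_zero]
      linarith [hy.2]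
    refine le_antisymm ?_ (zero_le)
    calc ∫⁻ y in Icc (-1:ℝ) 1, ENNReal.ofReal (y - w + 1) ∂ν
        ≤ ∫⁻ _ in Icc (-1:ℝ) 1, (0:ℝ≥0∞) ∂ν := setLIntegral_mono measurable_const this
      _ = 0 := by simp

lemma scaling {f : ℝ → ℝ≥0∞} (hf : Measurable f) {x : ℝ} (hx : x ≠ 0) :
    ∫⁻ z, f (z / x) ∂volume = ENNReal.ofReal |x| * ∫⁻ w, f w ∂volume := by
  have h1 : (fun z : ℝ => f (z / x)) = fun z => f (x⁻¹ * z) := by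
    funext z; rw [div_eq_inv_mul]
  rw [h1, ← lintegral_map hf (measurable_const_mul _),
    Real.map_volume_mul_left (inv_ne_zero hx), inv_inv, lintegral_smul_measure, smul_eq_mul]

end Aux1
namespace Aux1

lemma lemA {y : ℝ} (hy : -1 ≤ y) :
    ∫⁻ w in Ico (0:ℝ) 1, ENNReal.ofReal (w - 1 - y) ∂volume
      ≤ ENNReal.ofReal (min 1 (y ^ 2)) := by
  rcases le_or_gt 0 y with h0 | h0
  · calc ∫⁻ w in Ico (0:ℝ) 1, ENNReal.ofReal (w - 1 - y) ∂volume
        ≤ ∫⁻ _ in Ico (0:ℝ) 1, (0:ℝ≥0∞) ∂volume := by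
          refine setLIntegral_mono measurable_const fun w hw => ?_
          simp only [nonpos_iff_eq_zero, ENNReal.ofReal_eq_zero]
          linarith [hw.2]
      _ = 0 := by simp
      _ ≤ _ := zero_le
  · calc ∫⁻ w in Ico (0:ℝ) 1, ENNReal.ofReal (w - 1 - y) ∂volume
        ≤ ∫⁻ w in Ico (0:ℝ) 1, (Ioi (1+y)).indicator (fun _ => ENNReal.ofReal (-y)) w ∂volume := by
          refine setLIntegral_mono (measurable_const.indicator measurableSet_Ioi) fun w hw => ?_
          by_cases hw1 : w ∈ Ioi (1+y)
          · rw [indicator_of_mem hw1]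
            exact ENNReal.ofReal_le_ofReal (by linarith [hw.2])
          · rw [indicator_of_notMem hw1]
            simp only [mem_Ioi, not_lt] at hw1
            simp only [nonpos_iff_eq_zero, ENNReal.ofReal_eq_zero]
            linarith
      _ = ENNReal.ofReal (-y) * volume (Ioi (1+y) ∩ Ico 0 1) := by
          rw [lintegral_indicator measurableSet_Ioi,
            Measure.restrict_restrict measurableSet_Ioi, setLIntegral_const]
      _ ≤ ENNReal.ofReal (-y) * ENNReal.ofReal (-y) := by
          refine mul_le_mul_right ?_ _
          refine le_trans (measure_mono (show Ioi (1+y) ∩ Ico 0 1 ⊆ Ioc (1+y) 1 from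
            fun w hw => ⟨hw.1, hw.2.2.le⟩)) ?_
          rw [Real.volume_Ioc]
          exact ENNReal.ofReal_le_ofReal (by linarith)
      _ = ENNReal.ofReal (min 1 (y ^ 2)) := by
          rw [← ENNReal.ofReal_mul (by linarith)]
          congr 1
          rw [min_eq_right (by nlinarith)]
          ring

lemma lemB {y : ℝ} (hy : y ∈ Icc (-1:ℝ) 1) :
    ∫⁻ w in Ioi (1:ℝ), ENNReal.ofReal (y - w + 1) ∂volume
      ≤ ENNReal.ofReal (min 1 (y ^ 2)) := by
  rcases le_or_gt y 0 with h0 | h0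
  · calc ∫⁻ w in Ioi (1:ℝ), ENNReal.ofReal (y - w + 1) ∂volume
        ≤ ∫⁻ _ in Ioi (1:ℝ), (0:ℝ≥0∞) ∂volume := by
          refine setLIntegral_mono measurable_const fun w hw => ?_
          simp only [nonpos_iff_eq_zero, ENNReal.ofReal_eq_zero]
          have : 1 < w := hw
          linarith
      _ = 0 := by simp
      _ ≤ _ := zero_le
  · calc ∫⁻ w in Ioi (1:ℝ), ENNReal.ofReal (y - w + 1) ∂volume
        ≤ ∫⁻ w in Ioi (1:ℝ), (Iio (1+y)).indicator (fun _ => ENNReal.ofReal y) w ∂volume := by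
          refine setLIntegral_mono (measurable_const.indicator measurableSet_Iio) fun w hw => ?_
          have hw' : 1 < w := hw
          by_cases hw1 : w ∈ Iio (1+y)
          · rw [indicator_of_mem hw1]
            exact ENNReal.ofReal_le_ofReal (by linarith)
          · rw [indicator_of_notMem hw1]
            simp only [mem_Iio, not_lt] at hw1
            simp only [nonpos_iff_eq_zero, ENNReal.ofReal_eq_zero]
            linarith
      _ = ENNReal.ofReal y * volume (Iio (1+y) ∩ Ioi 1) := by
          rw [lintegral_indicator measurableSet_Iio,
            Measure.restrict_restrict measurableSet_Iio, setLIntegral_const]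
      _ ≤ ENNReal.ofReal y * ENNReal.ofReal y := by
          refine mul_le_mul_right ?_ _
          refine le_trans (measure_mono (show Iio (1+y) ∩ Ioi 1 ⊆ Ioo 1 (1+y) from
            fun w hw => ⟨hw.2, hw.1⟩)) ?_
          rw [Real.volume_Ioo]
          exact ENNReal.ofReal_le_ofReal (by linarith)
      _ = ENNReal.ofReal (min 1 (y ^ 2)) := by
          rw [← ENNReal.ofReal_mul h0.le]
          congr 1
          rw [min_eq_right (by nlinarith [hy.2])]
          ring

end Aux1
namespace Aux1

lemma lintegral_g_le (ν : Measure ℝ) (hν0 : ν {0} = 0)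
    (hνint : ∫⁻ y, ENNReal.ofReal (min 1 (y ^ 2)) ∂ν < ⊤) :
    ∫⁻ w, g ν w ∂volume ≤ 2 * ∫⁻ y, ENNReal.ofReal (min 1 (y ^ 2)) ∂ν := by
  haveI := sigmaFinite_of_levy ν hν0 hνint
  have hadd : ∫⁻ w, g ν w ∂volume
      = (∫⁻ w in Ico (0:ℝ) 1, g1 ν w ∂volume) + ∫⁻ w in Ioi (1:ℝ), g2 ν w ∂volume := by
    unfold g
    rw [lintegral_add_left (((g1_mono ν).measurable).indicator measurableSet_Ico),
      lintegral_indicator measurableSet_Ico, lintegral_indicator measurableSet_Ioi]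
  rw [hadd, two_mul]
  refine add_le_add ?_ ?_
  · have hswap : ∫⁻ w in Ico (0:ℝ) 1, g1 ν w ∂volume
        = ∫⁻ y in Ici (-1:ℝ), ∫⁻ w in Ico (0:ℝ) 1, ENNReal.ofReal (w - 1 - y) ∂volume ∂ν := by
      unfold g1
      exact lintegral_lintegral_swap
        (((measurable_fst.sub measurable_const).sub measurable_snd).ennreal_ofReal).aemeasurable
    rw [hswap]
    calc ∫⁻ y in Ici (-1:ℝ), ∫⁻ w in Ico (0:ℝ) 1, ENNReal.ofReal (w - 1 - y) ∂volume ∂ν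
        ≤ ∫⁻ y in Ici (-1:ℝ), ENNReal.ofReal (min 1 (y ^ 2)) ∂ν :=
          setLIntegral_mono
            ((continuous_const.min (continuous_pow 2)).measurable.ennreal_ofReal)
            fun y hy => lemA hy
      _ ≤ _ := setLIntegral_le_lintegral _ _
  · have hswap : ∫⁻ w in Ioi (1:ℝ), g2 ν w ∂volume
        = ∫⁻ y in Icc (-1:ℝ) 1, ∫⁻ w in Ioi (1:ℝ), ENNReal.ofReal (y - w + 1) ∂volume ∂ν := by
      unfold g2
      exact lintegral_lintegral_swap
        (((measurable_snd.sub measurable_fst).add measurable_const).ennreal_ofReal).aemeasurable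
    rw [hswap]
    calc ∫⁻ y in Icc (-1:ℝ) 1, ∫⁻ w in Ioi (1:ℝ), ENNReal.ofReal (y - w + 1) ∂volume ∂ν
        ≤ ∫⁻ y in Icc (-1:ℝ) 1, ENNReal.ofReal (min 1 (y ^ 2)) ∂ν :=
          setLIntegral_mono
            ((continuous_const.min (continuous_pow 2)).measurable.ennreal_ofReal)
            fun y hy => lemB hy
      _ ≤ _ := setLIntegral_le_lintegral _ _

lemma Phi_le (ν : Measure ℝ) (hν0 : ν {0} = 0)
    (hνint : ∫⁻ y, ENNReal.ofReal (min 1 (y ^ 2)) ∂ν < ⊤)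
    {t : ℝ} (ht0 : 0 ≤ t) (ht : t ≤ 1/2) :
    ∫⁻ w in Icc (0:ℝ) t, g ν w ∂volume
      ≤ ENNReal.ofReal (t ^ 2) * ν (Icc (-1:ℝ) (-(1/2))) := by
  haveI := sigmaFinite_of_levy ν hν0 hνint
  have step1 : ∫⁻ w in Icc (0:ℝ) t, g ν w ∂volume ≤ ∫⁻ w in Icc (0:ℝ) t, g1 ν w ∂volume := by
    refine setLIntegral_mono ((g1_mono ν).measurable) fun w hw => ?_
    unfold g
    rw [indicator_of_notMem (show w ∉ Ioi (1:ℝ) by simp; linarith [hw.2]), add_zero]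
    exact indicator_le_self _ _ w
  refine le_trans step1 ?_
  have hswap : ∫⁻ w in Icc (0:ℝ) t, g1 ν w ∂volume
      = ∫⁻ y in Ici (-1:ℝ), ∫⁻ w in Icc (0:ℝ) t, ENNReal.ofReal (w - 1 - y) ∂volume ∂ν := by
    unfold g1
    exact lintegral_lintegral_swap
      (((measurable_fst.sub measurable_const).sub measurable_snd).ennreal_ofReal).aemeasurable
  rw [hswap]
  calc ∫⁻ y in Ici (-1:ℝ), ∫⁻ w in Icc (0:ℝ) t, ENNReal.ofReal (w - 1 - y) ∂volume ∂ν
      ≤ ∫⁻ y in Ici (-1:ℝ), (Iio (t-1)).indicator (fun _ => ENNReal.ofReal (t ^ 2)) y ∂ν := by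
        refine setLIntegral_mono (measurable_const.indicator measurableSet_Iio) fun y hy => ?_
        have hy' : -1 ≤ y := hy
        by_cases hyt : y ∈ Iio (t - 1)
        · rw [indicator_of_mem hyt]
          have hyt' : y < t - 1 := hyt
          calc ∫⁻ w in Icc (0:ℝ) t, ENNReal.ofReal (w - 1 - y) ∂volume
              ≤ ∫⁻ _ in Icc (0:ℝ) t, ENNReal.ofReal t ∂volume :=
                setLIntegral_mono measurable_const fun w hw =>
                  ENNReal.ofReal_le_ofReal (by linarith [hw.2])
            _ = ENNReal.ofReal t * volume (Icc (0:ℝ) t) := setLIntegral_const _ _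
            _ = ENNReal.ofReal (t ^ 2) := by
                rw [Real.volume_Icc, sub_zero, ← ENNReal.ofReal_mul ht0]
                congr 1; ring
        · rw [indicator_of_notMem hyt]
          simp only [mem_Iio, not_lt] at hyt
          calc ∫⁻ w in Icc (0:ℝ) t, ENNReal.ofReal (w - 1 - y) ∂volume
              ≤ ∫⁻ _ in Icc (0:ℝ) t, (0:ℝ≥0∞) ∂volume := by
                refine setLIntegral_mono measurable_const fun w hw => ?_
                simp only [nonpos_iff_eq_zero, ENNReal.ofReal_eq_zero]
                linarith [hw.2]
            _ = 0 := by simp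
    _ = ENNReal.ofReal (t ^ 2) * ν (Iio (t-1) ∩ Ici (-1:ℝ)) := by
        rw [lintegral_indicator measurableSet_Iio,
          Measure.restrict_restrict measurableSet_Iio, setLIntegral_const]
    _ ≤ ENNReal.ofReal (t ^ 2) * ν (Icc (-1:ℝ) (-(1/2))) := by
        refine mul_le_mul_right (measure_mono fun y hy => ?_) _
        exact ⟨hy.2, by have : y < t - 1 := hy.1; linarith⟩

end Aux1
namespace Aux1

/-- The uniform constant. -/
def D (ν : Measure ℝ) (M : ℝ) : ℝ≥0∞ :=
  ENNReal.ofReal (4 * M ^ 2) * (2 * ∫⁻ y, ENNReal.ofReal (min 1 (y ^ 2)) ∂ν)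
    + ENNReal.ofReal (M ^ 2) * ν (Icc (-1:ℝ) (-(1/2)))

lemma D_lt_top (ν : Measure ℝ) (hνint : ∫⁻ y, ENNReal.ofReal (min 1 (y ^ 2)) ∂ν < ⊤)
    (M : ℝ) : D ν M < ⊤ := by
  have hCν : ν (Icc (-1:ℝ) (-(1/2))) < ⊤ := by
    refine lt_of_le_of_lt (measure_mono (fun y hy => ?_)) (markov ν hνint (c := 1/4) (by norm_num))
    have h1 : (-1:ℝ) ≤ y := hy.1
    have h2 : y ≤ -(1/2) := hy.2
    have : (1/4 : ℝ) ≤ y ^ 2 := by nlinarith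
    exact le_min (by norm_num) this
  have h2I : (2 : ℝ≥0∞) * ∫⁻ y, ENNReal.ofReal (min 1 (y ^ 2)) ∂ν < ⊤ :=
    ENNReal.mul_lt_top (by norm_num) hνint
  exact ENNReal.add_lt_top.mpr
    ⟨ENNReal.mul_lt_top ENNReal.ofReal_lt_top h2I,
     ENNReal.mul_lt_top ENNReal.ofReal_lt_top hCν⟩

lemma core (ν : Measure ℝ) (hν0 : ν {0} = 0)
    (hνint : ∫⁻ y, ENNReal.ofReal (min 1 (y ^ 2)) ∂ν < ⊤)
    {M x : ℝ} (hM : 1 ≤ M) (hx : x ≠ 0) :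
    ENNReal.ofReal |x| * ∫⁻ z in Icc (-M) M, g ν (z / x) ∂volume ≤ D ν M := by
  have hxpos : 0 < |x| := abs_pos.mpr hx
  set f : ℝ → ℝ≥0∞ := ((x * ·) ⁻¹' (Icc (-M) M)).indicator (g ν) with hf
  have hfmeas : Measurable f :=
    (g_measurable ν).indicator ((measurable_const_mul x) measurableSet_Icc)
  have heq : ∫⁻ z in Icc (-M) M, g ν (z / x) ∂volume = ∫⁻ z, f (z / x) ∂volume := by
    rw [← lintegral_indicator measurableSet_Icc]
    refine lintegral_congr fun z => ?_
    have hc : x * (z / x) = z := by field_simp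
    by_cases hz : z ∈ Icc (-M) M
    · rw [indicator_of_mem hz, hf, indicator_of_mem (by simpa [hc] using hz)]
    · rw [indicator_of_notMem hz, hf, indicator_of_notMem (by simpa [hc] using hz)]
  rw [heq, scaling hfmeas hx]
  set t := min 2 (M / |x|) with hT
  have hfle : ∀ w, f w ≤ (Icc (0:ℝ) t).indicator (g ν) w := by
    intro w
    by_cases hw : w ∈ (x * ·) ⁻¹' (Icc (-M) M)
    · rw [hf, indicator_of_mem hw]
      by_cases hg : g ν w = 0
      · rw [hg]; exact zero_le
      · have hw2 : w ∈ Icc (0:ℝ) 2 := by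
          by_contra h
          exact hg (g_eq_zero_of_notmem ν h)
        have hwM : w ≤ M / |x| := by
          rw [le_div_iff₀ hxpos]
          have habs : |x * w| ≤ M := abs_le.mpr ⟨hw.1, hw.2⟩
          calc w * |x| = |x * w| := by
                rw [abs_mul, abs_of_nonneg hw2.1]; ring
            _ ≤ M := habs
        rw [indicator_of_mem (show w ∈ Icc (0:ℝ) t from ⟨hw2.1, le_min hw2.2 hwM⟩)]
    · rw [hf, indicator_of_notMem hw]; exact zero_le
  have hstep : ∫⁻ w, f w ∂volume ≤ ∫⁻ w in Icc (0:ℝ) t, g ν w ∂volume := by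
    rw [← lintegral_indicator measurableSet_Icc]
    exact lintegral_mono hfle
  rw [← mul_assoc, ← ENNReal.ofReal_mul (abs_nonneg x)]
  rcases le_or_gt |x| (2 * M) with hcase | hcase
  · -- small x: use total integral of g
    refine le_trans (le_trans (mul_le_mul_right hstep _) ?_) le_self_add
    calc ENNReal.ofReal (|x| * |x|) * ∫⁻ w in Icc (0:ℝ) t, g ν w ∂volume
        ≤ ENNReal.ofReal (4 * M ^ 2) * ∫⁻ w, g ν w ∂volume := by
          refine mul_le_mul' (ENNReal.ofReal_le_ofReal (by nlinarith [abs_nonneg x])) ?_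
          exact setLIntegral_le_lintegral _ _
      _ ≤ ENNReal.ofReal (4 * M ^ 2) *
            (2 * ∫⁻ y, ENNReal.ofReal (min 1 (y ^ 2)) ∂ν) :=
          mul_le_mul_right (lintegral_g_le ν hν0 hνint) _
  · -- large x: use Phi_le
    have hMx0 : 0 ≤ M / |x| := div_nonneg (by linarith) hxpos.le
    have hMx : M / |x| ≤ 1 / 2 := by
      rw [div_le_div_iff₀ hxpos (by norm_num)]
      linarith
    have ht : t = M / |x| := min_eq_right (by linarith)
    refine le_trans (mul_le_mul_right hstep _) (le_trans ?_ le_add_self)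
    rw [ht]
    calc ENNReal.ofReal (|x| * |x|) * ∫⁻ w in Icc (0:ℝ) (M / |x|), g ν w ∂volume
        ≤ ENNReal.ofReal (|x| * |x|) *
            (ENNReal.ofReal ((M / |x|) ^ 2) * ν (Icc (-1:ℝ) (-(1/2)))) :=
          mul_le_mul_right (Phi_le ν hν0 hνint hMx0 hMx) _
      _ = ENNReal.ofReal (|x| * |x| * (M / |x|) ^ 2) * ν (Icc (-1:ℝ) (-(1/2))) := by
          rw [← mul_assoc, ← ENNReal.ofReal_mul (mul_nonneg (abs_nonneg x) (abs_nonneg x))]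
      _ ≤ ENNReal.ofReal (M ^ 2) * ν (Icc (-1:ℝ) (-(1/2))) := by
          refine mul_le_mul_left (ENNReal.ofReal_le_ofReal ?_) _
          have h1 : |x| * |x| * (M / |x|) ^ 2 = M ^ 2 := by
            field_simp
          rw [h1]

end Aux1
namespace Aux1

lemma main_bound (μ : Measure ℝ) [IsProbabilityMeasure μ] (ν : Measure ℝ)
    (hν0 : ν {0} = 0)
    (hνint : ∫⁻ y, ENNReal.ofReal (min 1 (y ^ 2)) ∂ν < ⊤)
    {M : ℝ} (hM : 1 ≤ M) :
    (∫⁻ z in Icc (-M) M,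
        ((if 0 < z then ∫⁻ x in Ioi (0 : ℝ), ENNReal.ofReal (x * SUmap ν (z / x)) ∂μ else 0)
          + (if z < 0 then ∫⁻ x in Iio (0 : ℝ), ENNReal.ofReal (|x| * SUmap ν (z / x)) ∂μ else 0))
        ∂volume) ≤ D ν M + D ν M := by
  have hgdiv : Measurable fun p : ℝ × ℝ => g ν (p.1 / p.2) :=
    (g_measurable ν).comp (measurable_fst.div measurable_snd)
  have hH : Measurable fun p : ℝ × ℝ => ENNReal.ofReal |p.2| * g ν (p.1 / p.2) :=
    (measurable_snd.abs.ennreal_ofReal).mul hgdiv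
  -- pointwise bound by the g-version
  have hpt : ∀ z : ℝ,
      ((if 0 < z then ∫⁻ x in Ioi (0 : ℝ), ENNReal.ofReal (x * SUmap ν (z / x)) ∂μ else 0)
        + (if z < 0 then ∫⁻ x in Iio (0 : ℝ), ENNReal.ofReal (|x| * SUmap ν (z / x)) ∂μ else 0))
      ≤ (∫⁻ x in Ioi (0 : ℝ), ENNReal.ofReal |x| * g ν (z / x) ∂μ)
        + ∫⁻ x in Iio (0 : ℝ), ENNReal.ofReal |x| * g ν (z / x) ∂μ := by
    intro z
    refine add_le_add ?_ ?_
    · split_ifs with h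
      · refine setLIntegral_mono
          ((measurable_id.abs.ennreal_ofReal).mul
            ((g_measurable ν).comp (measurable_const.div measurable_id))) fun x hx => ?_
        have hx0 : (0:ℝ) < x := hx
        rw [ENNReal.ofReal_mul hx0.le]
        calc ENNReal.ofReal x * ENNReal.ofReal (SUmap ν (z / x))
            ≤ ENNReal.ofReal x * g ν (z / x) := mul_le_mul_right (ofReal_SUmap_le ν _) _
          _ = ENNReal.ofReal |x| * g ν (z / x) := by rw [abs_of_pos hx0]
      · exact zero_le
    · split_ifs with h
      · refine setLIntegral_mono
          ((measurable_id.abs.ennreal_ofReal).mul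
            ((g_measurable ν).comp (measurable_const.div measurable_id))) fun x hx => ?_
        rw [ENNReal.ofReal_mul (abs_nonneg x)]
        exact mul_le_mul_right (ofReal_SUmap_le ν _) _
      · exact zero_le
  refine le_trans (lintegral_mono hpt) ?_
  rw [lintegral_add_left (hH.lintegral_prod_right')]
  have hone : ∀ s : Set ℝ, (0:ℝ) ∉ s →
      ∫⁻ z in Icc (-M) M, ∫⁻ x in s, ENNReal.ofReal |x| * g ν (z / x) ∂μ ∂volume
        ≤ D ν M := by
    intro s hs
    rw [lintegral_lintegral_swap hH.aemeasurable]
    calc ∫⁻ x in s, ∫⁻ z in Icc (-M) M, ENNReal.ofReal |x| * g ν (z / x) ∂volume ∂μ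
        ≤ ∫⁻ _ in s, D ν M ∂μ := by
          refine setLIntegral_mono measurable_const fun x hx => ?_
          have hx0 : x ≠ 0 := fun h => hs (h ▸ hx)
          rw [lintegral_const_mul _ (show Measurable fun z : ℝ => g ν (z / x) from (g_measurable ν).comp (measurable_id.div_const x))]
          exact core ν hν0 hνint hM hx0
      _ = D ν M * μ s := setLIntegral_const _ _
      _ ≤ D ν M * 1 := mul_le_mul_right prob_le_one _
      _ = D ν M := mul_one _
  exact add_le_add (hone _ (fun h => lt_irrefl _ (mem_Ioi.mp h)))
    (hone _ (fun h => lt_irrefl _ (mem_Iio.mp h)))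

end Aux1
theorem stmt1 (μ : Measure ℝ) [IsProbabilityMeasure μ] (ν : Measure ℝ)
    (hν0 : ν {0} = 0) (hνconc : ν (Iio (-1 : ℝ)) = 0)
    (hνint : ∫⁻ y, ENNReal.ofReal (min 1 (y ^ 2)) ∂ν < ⊤) :
    ∀ K : Set ℝ, IsCompact K →
      (∫⁻ z in K,
        ((if 0 < z then ∫⁻ x in Ioi (0 : ℝ), ENNReal.ofReal (x * SUmap ν (z / x)) ∂μ else 0)
          + (if z < 0 then ∫⁻ x in Iio (0 : ℝ), ENNReal.ofReal (|x| * SUmap ν (z / x)) ∂μ else 0))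
        ∂volume) < ⊤ := by
  intro K hK
  obtain ⟨r, hr⟩ := hK.isBounded.subset_closedBall 0
  set M := max r 1 with hMdef
  have hM : 1 ≤ M := le_max_right _ _
  have hKM : K ⊆ Icc (-M) M := by
    intro z hz
    have h := hr hz
    rw [Real.closedBall_eq_Icc] at h
    have h1 : 0 - r ≤ z := h.1
    have h2 : z ≤ 0 + r := h.2
    have hrM : r ≤ M := le_max_left _ _
    exact ⟨by linarith, by linarith⟩
  refine lt_of_le_of_lt (lintegral_mono_set hKM) ?_
  refine lt_of_le_of_lt (Aux1.main_bound μ ν hν0 hνint hM) ?_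
  exact ENNReal.add_lt_top.mpr ⟨Aux1.D_lt_top ν hνint M, Aux1.D_lt_top ν hνint M⟩

end
end

section
/- Let (σ_η², ν_η, γ_η) and (σ_Ũ², ν_Ũ, γ_Ũ) be Lévy triplets with ν_Ũ concentrated on [−1,∞), and let μ be any Borel probability measure on ℝ. Then for every f ∈ C_c^∞(ℝ), all integrals below are absolutely convergent and ∫_ℝ (Af)(x) μ(dx) = ∫_ℝ f''(z) (σ_η²/2 + z² σ_Ũ²/2) μ(dz) + ∫_ℝ f''(z) [ (S_η∗μ)(z) + r_μ(z) ] dz + ∫_ℝ f'(z) (γ_η + z γ_Ũ) μ(dz) + ∫_ℝ f'(z) (B_η∗μ)(z) dz + ∫_ℝ f'(z) κ_μ(z) dz. -/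
open MeasureTheory Set Filter

noncomputable section

open KEF

namespace KEFAux


/-! ### Preliminaries on Lévy measures -/

lemma levy_meas_lt_top {ν : Measure ℝ} (h : IsLevyMeasure ν) {ε : ℝ} (hε : 0 < ε) (hε1 : ε ≤ 1)
    {s : Set ℝ} (hs : ∀ y ∈ s, ε ≤ |y|) : ν s < ⊤ := by
  have key : ENNReal.ofReal (ε ^ 2) * ν s ≤ ∫⁻ y, ENNReal.ofReal (min 1 (y ^ 2)) ∂ν := by
    have : ν s ≤ ν {y : ℝ | ε ≤ |y|} := measure_mono hs
    calc ENNReal.ofReal (ε ^ 2) * ν s ≤ ENNReal.ofReal (ε ^ 2) * ν {y : ℝ | ε ≤ |y|} := by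
          exact mul_le_mul_right this _
      _ = ∫⁻ y in {y : ℝ | ε ≤ |y|}, ENNReal.ofReal (ε ^ 2) ∂ν := by
          rw [setLIntegral_const, mul_comm]
      _ ≤ ∫⁻ y in {y : ℝ | ε ≤ |y|}, ENNReal.ofReal (min 1 (y ^ 2)) ∂ν := by
          refine setLIntegral_mono' ?_ ?_
          · exact measurableSet_le measurable_const measurable_norm
          · intro y hy
            refine ENNReal.ofReal_le_ofReal (le_min (by nlinarith) ?_)
            have : ε ≤ |y| := hy
            nlinarith [abs_nonneg y, sq_abs y]
      _ ≤ ∫⁻ y, ENNReal.ofReal (min 1 (y ^ 2)) ∂ν := setLIntegral_le_lintegral _ _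
  by_contra hcon
  push_neg at hcon
  rw [top_le_iff.mp hcon, ENNReal.mul_top (by simp [hε.ne', pow_pos hε])] at key
  exact absurd (top_le_iff.mp key) (by simpa using h.2.ne)

lemma levy_sigmaFinite {ν : Measure ℝ} (h : IsLevyMeasure ν) : SigmaFinite ν := by
  refine ⟨⟨⟨fun n => {0} ∪ {y : ℝ | 1 / (n + 1) ≤ |y|}, fun _ => trivial, fun n => ?_, ?_⟩⟩⟩
  · refine lt_of_le_of_lt (measure_union_le _ _) ?_
    rw [h.1, zero_add]
    rcases le_or_gt (1 / ((n : ℝ) + 1)) 1 with hn | hn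
    · exact levy_meas_lt_top h (by positivity) hn (fun y hy => hy)
    · refine lt_of_le_of_lt (measure_mono (fun y hy => ?_)) (levy_meas_lt_top h one_pos le_rfl
        (s := {y : ℝ | 1 ≤ |y|}) (fun y hy => hy))
      exact le_trans hn.le hy
  · ext y
    simp only [mem_iUnion, mem_union, mem_singleton_iff, mem_setOf_eq, mem_univ, iff_true]
    rcases eq_or_ne y 0 with rfl | hy
    · exact ⟨0, Or.inl rfl⟩
    · obtain ⟨n, hn⟩ := exists_nat_one_div_lt (abs_pos.mpr hy)
      exact ⟨n, Or.inr hn.le⟩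

lemma levy_integrable_min {ν : Measure ℝ} (h : IsLevyMeasure ν) :
    Integrable (fun y => min 1 (y ^ 2)) ν := by
  refine ⟨(continuous_const.min (continuous_pow 2)).aestronglyMeasurable, ?_⟩
  rw [hasFiniteIntegral_iff_ofReal (Eventually.of_forall fun y => le_min one_pos.le (sq_nonneg y))]
  exact h.2



/-! ### The kernels -/

def rho2 (x h z : ℝ) : ℝ :=
  (Ioc x (x + h)).indicator (fun w => x + h - w) z
    + (Ioc (x + h) x).indicator (fun w => w - (x + h)) z

def rho1 (x h z : ℝ) : ℝ :=
  (Ioo x (x + h)).indicator (fun _ => 1) z - (Ioo (x + h) x).indicator (fun _ => 1) z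

lemma rho2_of_nonneg {x h : ℝ} (hh : 0 ≤ h) (z : ℝ) :
    rho2 x h z = (Ioc x (x + h)).indicator (fun w => x + h - w) z := by
  have : Ioc (x + h) x = ∅ := Ioc_eq_empty (by linarith)
  simp [rho2, this]

lemma rho2_of_nonpos {x h : ℝ} (hh : h ≤ 0) (z : ℝ) :
    rho2 x h z = (Ioc (x + h) x).indicator (fun w => w - (x + h)) z := by
  have : Ioc x (x + h) = ∅ := Ioc_eq_empty (by linarith)
  simp [rho2, this]

lemma rho2_nonneg (x h z : ℝ) : 0 ≤ rho2 x h z := by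
  rcases le_or_gt 0 h with hh | hh
  · rw [rho2_of_nonneg hh]
    apply Set.indicator_nonneg
    intro w hw; simp only [mem_Ioc] at hw; linarith [hw.2]
  · rw [rho2_of_nonpos hh.le]
    apply Set.indicator_nonneg
    intro w hw; simp only [mem_Ioc] at hw; linarith [hw.1]

lemma rho1_abs_le (x h z : ℝ) : |rho1 x h z| ≤ 1 := by
  rcases le_or_gt 0 h with hh | hh
  · have : Ioo (x + h) x = ∅ := Ioo_eq_empty (by intro hc; linarith)
    rw [rho1, this]
    simp only [Set.indicator_empty, Pi.zero_apply, sub_zero]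
    rcases Set.indicator_eq_zero_or_self (Ioo x (x+h)) (fun _ => (1:ℝ)) z with h0 | h1
    · simp [h0]
    · simp [h1]
  · have : Ioo x (x + h) = ∅ := Ioo_eq_empty (by intro hc; linarith)
    rw [rho1, this]
    simp only [Set.indicator_empty, Pi.zero_apply, zero_sub, abs_neg]
    rcases Set.indicator_eq_zero_or_self (Ioo (x+h) x) (fun _ => (1:ℝ)) z with h0 | h1
    · simp [h0]
    · simp [h1]

/-- Key rewriting: integral of `g * rho2` as an interval integral. -/
lemma integral_rho2 (g : ℝ → ℝ) (x h : ℝ) :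
    ∫ z, g z * rho2 x h z = ∫ w in x..(x + h), (x + h - w) * g w := by
  rcases le_or_gt 0 h with hh | hh
  · rw [intervalIntegral.integral_of_le (by linarith), ← integral_indicator measurableSet_Ioc]
    congr 1; funext z
    rw [rho2_of_nonneg hh]
    by_cases hz : z ∈ Ioc x (x + h) <;> simp [Set.indicator_of_mem, Set.indicator_of_notMem, hz,
      mul_comm]
  · rw [intervalIntegral.integral_of_ge (by linarith), ← integral_indicator measurableSet_Ioc,
      ← integral_neg]
    congr 1; funext z
    rw [rho2_of_nonpos hh.le]
    by_cases hz : z ∈ Ioc (x + h) x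
    · simp only [Set.indicator_of_mem hz]; ring
    · simp [Set.indicator_of_notMem, hz]

lemma integral_rho1 (g : ℝ → ℝ) (x h : ℝ) :
    ∫ z, g z * rho1 x h z = ∫ w in x..(x + h), g w := by
  rcases le_or_gt 0 h with hh | hh
  · have he : Ioo (x + h) x = ∅ := Ioo_eq_empty (by intro hc; linarith)
    rw [intervalIntegral.integral_of_le (by linarith), integral_Ioc_eq_integral_Ioo,
      ← integral_indicator measurableSet_Ioo]
    congr 1; funext z
    rw [rho1, he]
    by_cases hz : z ∈ Ioo x (x + h) <;>
      simp [Set.indicator_of_mem, Set.indicator_of_notMem, hz]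
  · have he : Ioo x (x + h) = ∅ := Ioo_eq_empty (by intro hc; linarith)
    rw [intervalIntegral.integral_of_ge (by linarith), integral_Ioc_eq_integral_Ioo,
      ← integral_indicator measurableSet_Ioo, ← integral_neg]
    congr 1; funext z
    rw [rho1, he]
    by_cases hz : z ∈ Ioo (x + h) x <;>
      simp [Set.indicator_of_mem, Set.indicator_of_notMem, hz]

lemma integrable_rho2 (x h : ℝ) : Integrable (rho2 x h) := by
  apply Integrable.add
  · refine (IntegrableOn.integrable_indicator ?_ measurableSet_Ioc)
    exact (continuous_const.sub continuous_id).integrableOn_Ioc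
  · refine (IntegrableOn.integrable_indicator ?_ measurableSet_Ioc)
    exact (continuous_id.sub continuous_const).integrableOn_Ioc

lemma integrable_rho1 (x h : ℝ) : Integrable (rho1 x h) := by
  apply Integrable.sub
  · exact (IntegrableOn.integrable_indicator (integrableOn_const
      measure_Ioo_lt_top.ne) measurableSet_Ioo)
  · exact (IntegrableOn.integrable_indicator (integrableOn_const
      measure_Ioo_lt_top.ne) measurableSet_Ioo)

lemma integral_rho2_self (x h : ℝ) : ∫ z, rho2 x h z = h ^ 2 / 2 := by
  have h1 := integral_rho2 (fun _ => 1) x h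
  simp only [mul_one] at h1
  have h2 : ∫ z, rho2 x h z = ∫ z, rho2 x h z * 1 := by simp
  rw [h2, (by funext z; ring : (fun z => rho2 x h z * 1) = fun z => 1 * rho2 x h z), h1,
    intervalIntegral.integral_sub intervalIntegrable_const intervalIntegral.intervalIntegrable_id,
    intervalIntegral.integral_const, integral_id, smul_eq_mul]
  ring


section FTC

variable {f : ℝ → ℝ} (hf : ContDiff ℝ (⊤ : ℕ∞) f)
include hf

lemma cont_deriv : Continuous (deriv f) := hf.continuous_deriv (by exact_mod_cast le_top)

lemma contDiff_deriv : ContDiff ℝ (⊤ : ℕ∞) (deriv f) := by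
  have := (contDiff_infty_iff_deriv.mp (by exact_mod_cast hf)).2
  exact_mod_cast this

lemma cont_deriv2 : Continuous (deriv (deriv f)) :=
  (contDiff_deriv hf).continuous_deriv (by exact_mod_cast le_top)

lemma ftc1 (x h : ℝ) : f (x + h) - f x = ∫ z, deriv f z * rho1 x h z := by
  rw [integral_rho1 (deriv f) x h]
  exact (intervalIntegral.integral_deriv_eq_sub
    (fun w _ => (hf.differentiable (by simp)) w)
    ((cont_deriv hf).intervalIntegrable _ _)).symm

lemma ftc2 (x h : ℝ) :
    f (x + h) - f x - h * deriv f x = ∫ z, deriv (deriv f) z * rho2 x h z := by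
  rw [integral_rho2 (deriv (deriv f)) x h]
  have hparts := intervalIntegral.integral_mul_deriv_eq_deriv_mul
    (u := fun w => x + h - w) (u' := fun _ => (-1 : ℝ)) (v := deriv f) (v' := deriv (deriv f))
    (a := x) (b := x + h)
    (fun w _ => by simpa using (hasDerivAt_id w).const_sub (x + h))
    (fun w _ => (((contDiff_deriv hf).differentiable (by simp)) w).hasDerivAt)
    (intervalIntegrable_const) ((cont_deriv2 hf).intervalIntegrable _ _)
  have hftc : ∫ w in x..(x + h), deriv f w = f (x + h) - f x :=
    intervalIntegral.integral_deriv_eq_sub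
      (fun w _ => (hf.differentiable (by simp)) w)
      ((cont_deriv hf).intervalIntegrable _ _)
  have hneg : ∫ w in x..(x + h), (-1 : ℝ) * deriv f w = -(f (x + h) - f x) := by
    rw [← hftc, ← intervalIntegral.integral_neg]; congr 1; funext w; ring
  rw [hparts, hneg]
  ring

end FTC

section Bounds


lemma bdd_mul_integrable {g : ℝ → ℝ} {M : ℝ} (hg : Measurable g) (hM : ∀ z, |g z| ≤ M)
    {r : ℝ → ℝ} (hr : Integrable r) : Integrable (fun z => g z * r z) :=
  hr.bdd_mul hg.aestronglyMeasurable (Eventually.of_forall fun z => by simpa [Real.norm_eq_abs] using hM z)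

lemma integral_norm_mul_rho2_le {g : ℝ → ℝ} {M : ℝ} (hg : Measurable g) (hM : ∀ z, |g z| ≤ M)
    (x h : ℝ) : ∫ z, ‖g z * rho2 x h z‖ ≤ M * (h ^ 2 / 2) := by
  have hint : Integrable (fun z => g z * rho2 x h z) :=
    bdd_mul_integrable hg hM (integrable_rho2 x h)
  calc ∫ z, ‖g z * rho2 x h z‖ ≤ ∫ z, M * rho2 x h z := by
        refine integral_mono hint.norm ((integrable_rho2 x h).const_mul M) (fun z => ?_)
        rw [Real.norm_eq_abs, abs_mul, abs_of_nonneg (rho2_nonneg x h z)]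
        exact mul_le_mul_of_nonneg_right (hM z) (rho2_nonneg x h z)
    _ = M * (h ^ 2 / 2) := by rw [integral_const_mul, integral_rho2_self]

lemma rho2_ne_zero {x h z : ℝ} (hne : rho2 x h z ≠ 0) :
    z ∈ Ioc x (x + h) ∨ z ∈ Ioc (x + h) x := by
  by_contra hc
  push_neg at hc
  simp [rho2, Set.indicator_of_notMem hc.1, Set.indicator_of_notMem hc.2] at hne

lemma rho2_scaled_le {x y z R : ℝ} (hy : |y| ≤ 1) (hz : |z| ≤ R) : rho2 x (x * y) z ≤ 3 * R := by
  obtain ⟨hy1, hy2⟩ := abs_le.mp hy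
  obtain ⟨hz1, hz2⟩ := abs_le.mp hz
  have hR : 0 ≤ R := le_trans (abs_nonneg z) hz
  by_cases h1 : z ∈ Ioc x (x + x * y) <;> by_cases h2 : z ∈ Ioc (x + x * y) x
  · exact absurd (lt_of_lt_of_le h1.1 h2.2) (lt_irrefl x)
  · rw [rho2, Set.indicator_of_mem h1, Set.indicator_of_notMem h2, add_zero]
    obtain ⟨ha, hb⟩ := h1
    rcases le_or_gt 0 x with hx | hx
    · nlinarith [mul_le_mul_of_nonneg_left hy2 hx]
    · nlinarith [mul_nonpos_of_nonpos_of_nonneg hx.le (by linarith : (0:ℝ) ≤ 1 + y)]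
  · rw [rho2, Set.indicator_of_notMem h1, Set.indicator_of_mem h2, zero_add]
    obtain ⟨ha, hb⟩ := h2
    rcases le_or_gt 0 x with hx | hx
    · nlinarith [mul_nonneg hx (by linarith : (0:ℝ) ≤ 1 + y)]
    · nlinarith [mul_le_mul_of_nonpos_left hy2 hx.le]
  · rw [rho2, Set.indicator_of_notMem h1, Set.indicator_of_notMem h2]
    simp; linarith

lemma integral_norm_mul_rho2_scaled_le {g : ℝ → ℝ} {M R : ℝ} (hg : Measurable g)
    (hM : ∀ z, |g z| ≤ M) (hsupp : ∀ z, R < |z| → g z = 0) (hR : 0 ≤ R)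
    {x y : ℝ} (hy : |y| ≤ 1) :
    ∫ z, ‖g z * rho2 x (x * y) z‖ ≤ M * (3 * R) * (2 * R) := by
  have hM0 : 0 ≤ M := le_trans (abs_nonneg _) (hM 0)
  have hint : Integrable (fun z => g z * rho2 x (x * y) z) :=
    bdd_mul_integrable hg hM (integrable_rho2 x (x * y))
  calc ∫ z, ‖g z * rho2 x (x * y) z‖
      ≤ ∫ z, (Icc (-R) R).indicator (fun _ => M * (3 * R)) z := by
        refine integral_mono hint.norm ((integrableOn_const
          measure_Icc_lt_top.ne).integrable_indicator measurableSet_Icc) (fun z => ?_)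
        by_cases hz : |z| ≤ R
        · rw [Set.indicator_of_mem (abs_le.mp hz |> fun hh => Set.mem_Icc.mpr hh),
            Real.norm_eq_abs, abs_mul, abs_of_nonneg (rho2_nonneg _ _ _)]
          exact mul_le_mul (hM z) (rho2_scaled_le hy hz) (rho2_nonneg _ _ _) hM0
        · rw [hsupp z (not_le.mp hz), zero_mul, norm_zero]
          exact Set.indicator_nonneg (fun _ _ => by positivity) z
    _ = M * (3 * R) * (2 * R) := by
        rw [integral_indicator measurableSet_Icc, setIntegral_const, Real.volume_real_Icc,
          smul_eq_mul, max_eq_left (by linarith)]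
        ring

lemma integral_norm_mul_rho1_le {g : ℝ → ℝ} {M R : ℝ} (hg : Measurable g)
    (hM : ∀ z, |g z| ≤ M) (hsupp : ∀ z, R < |z| → g z = 0) (hR : 0 ≤ R)
    (x h : ℝ) : ∫ z, ‖g z * rho1 x h z‖ ≤ M * (2 * R) := by
  have hM0 : 0 ≤ M := le_trans (abs_nonneg _) (hM 0)
  have hint : Integrable (fun z => g z * rho1 x h z) :=
    bdd_mul_integrable hg hM (integrable_rho1 x h)
  calc ∫ z, ‖g z * rho1 x h z‖
      ≤ ∫ z, (Icc (-R) R).indicator (fun _ => M) z := by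
        refine integral_mono hint.norm ((integrableOn_const
          measure_Icc_lt_top.ne).integrable_indicator measurableSet_Icc) (fun z => ?_)
        by_cases hz : |z| ≤ R
        · rw [Set.indicator_of_mem (abs_le.mp hz |> fun hh => Set.mem_Icc.mpr hh),
            Real.norm_eq_abs, abs_mul]
          calc |g z| * |rho1 x h z| ≤ M * 1 :=
                mul_le_mul (hM z) (rho1_abs_le x h z) (abs_nonneg _) hM0
            _ = M := mul_one M
        · rw [hsupp z (not_le.mp hz), zero_mul, norm_zero]
          exact Set.indicator_nonneg (fun _ _ => hM0) z
    _ = M * (2 * R) := by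
        rw [integral_indicator measurableSet_Icc, setIntegral_const, Real.volume_real_Icc,
          smul_eq_mul, max_eq_left (by linarith)]
        ring

/-- The crucial uniform bound for the scaled kernel. -/
lemma intnorm_K2U_le {g : ℝ → ℝ} {M R : ℝ} (hg : Measurable g)
    (hM : ∀ z, |g z| ≤ M) (hsupp : ∀ z, R < |z| → g z = 0) (hR : 1 ≤ R)
    (x y : ℝ) (hy : |y| ≤ 1) :
    ∫ z, ‖g z * rho2 x (x * y) z‖ ≤ 24 * (M * R ^ 2) * min 1 (y ^ 2) := by
  have hM0 : 0 ≤ M := le_trans (abs_nonneg _) (hM 0)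
  have hymin : min 1 (y ^ 2) = y ^ 2 := min_eq_right (by nlinarith [abs_nonneg y, sq_abs y])
  rcases le_or_gt |x| (2 * R) with hx | hx
  · calc ∫ z, ‖g z * rho2 x (x * y) z‖ ≤ M * ((x * y) ^ 2 / 2) :=
          integral_norm_mul_rho2_le hg hM x (x * y)
      _ ≤ 24 * (M * R ^ 2) * min 1 (y ^ 2) := by
          rw [hymin]
          have h1 : (x * y) ^ 2 = x ^ 2 * y ^ 2 := by ring
          have h2 : x ^ 2 ≤ 4 * R ^ 2 := by nlinarith [abs_nonneg x, sq_abs x]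
          nlinarith [sq_nonneg y, sq_nonneg x, mul_nonneg hM0 (sq_nonneg y)]
  · by_cases hzero : ∀ z, g z * rho2 x (x * y) z = 0
    · have : (fun z => ‖g z * rho2 x (x * y) z‖) = fun _ => (0 : ℝ) := by
        funext z; rw [hzero z, norm_zero]
      rw [this, integral_zero]
      positivity
    · push_neg at hzero
      obtain ⟨z0, hz0⟩ := hzero
      have hgz0 : g z0 ≠ 0 := fun hc => hz0 (by rw [hc, zero_mul])
      have hrz0 : rho2 x (x * y) z0 ≠ 0 := fun hc => hz0 (by rw [hc, mul_zero])
      have hz0R : |z0| ≤ R := not_lt.mp (fun hc => hgz0 (hsupp _ hc))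
      obtain ⟨hz01, hz02⟩ := abs_le.mp hz0R
      obtain ⟨hy1, hy2⟩ := abs_le.mp hy
      -- derive y ≤ -1/2
      have hy' : y ≤ -(1/2) := by
        rcases rho2_ne_zero hrz0 with hm | hm
        · obtain ⟨ha, hb⟩ := hm
          rcases le_or_gt x 0 with hxs | hxs
          · -- x < -2R: z0 ≤ x + x*y = x(1+y) and x < z0, -R ≤ z0 so x(1+y) ≥ -R
            have hxneg : x < -(2 * R) := by
              rcases abs_cases x with ⟨he, _⟩ | ⟨he, _⟩ <;> linarith
            nlinarith
          · -- x > 2R contradiction with x < z0 ≤ R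
            have : x ≤ |x| := le_abs_self x
            have hxpos : 2 * R < x := by
              rcases abs_cases x with ⟨he, _⟩ | ⟨he, _⟩ <;> linarith
            linarith
        · obtain ⟨ha, hb⟩ := hm
          rcases le_or_gt x 0 with hxs | hxs
          · have hxneg : x < -(2 * R) := by
              rcases abs_cases x with ⟨he, _⟩ | ⟨he, _⟩ <;> linarith
            linarith
          · have hxpos : 2 * R < x := by
              rcases abs_cases x with ⟨he, _⟩ | ⟨he, _⟩ <;> linarith
            nlinarith
      have hmin : (1 : ℝ) / 4 ≤ min 1 (y ^ 2) := by
        rw [hymin]; nlinarith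
      calc ∫ z, ‖g z * rho2 x (x * y) z‖ ≤ M * (3 * R) * (2 * R) :=
            integral_norm_mul_rho2_scaled_le hg hM hsupp (by linarith) hy
        _ = 6 * (M * R ^ 2) := by ring
        _ ≤ 24 * (M * R ^ 2) * min 1 (y ^ 2) := by nlinarith [mul_nonneg hM0 (sq_nonneg R)]

end Bounds

end KEFAux


namespace KEFAux

lemma rho2_eq_ite (x h z : ℝ) : rho2 x h z =
    if x < z ∧ z ≤ x + h then x + h - z
    else if x + h < z ∧ z ≤ x then z - (x + h) else 0 := by
  simp only [rho2, Set.indicator_apply, mem_Ioc]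
  split_ifs <;> (try ring) <;>
  (exfalso; (try simp only [not_and_or, not_le, not_lt] at *); casesm* _ ∨ _, _ ∧ _ <;> linarith)

lemma rho1_eq_ite (x h z : ℝ) : rho1 x h z =
    if x < z ∧ z < x + h then 1
    else if x + h < z ∧ z < x then -1 else 0 := by
  simp only [rho1, Set.indicator_apply, mem_Ioo]
  split_ifs <;> (try ring) <;>
  (exfalso; (try simp only [not_and_or, not_le, not_lt] at *); casesm* _ ∨ _, _ ∧ _ <;> linarith)

lemma setIntegral_congr_edge {ν : Measure ℝ} {A B : Set ℝ} (hA : MeasurableSet A)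
    (hB : MeasurableSet B) {F : ℝ → ℝ} (hsub : ∀ y, (y ∈ A ↔ y ∈ B) ∨ F y = 0) :
    ∫ y in A, F y ∂ν = ∫ y in B, F y ∂ν := by
  rw [← integral_indicator hA, ← integral_indicator hB]
  congr 1; funext y
  rcases hsub y with h | h
  · by_cases hy : y ∈ A
    · rw [Set.indicator_of_mem hy, Set.indicator_of_mem (h.mp hy)]
    · rw [Set.indicator_of_notMem hy, Set.indicator_of_notMem (fun hc => hy (h.mpr hc))]
  · by_cases hy : y ∈ A <;> by_cases hy' : y ∈ B <;>
      simp [Set.indicator_apply, hy, hy', h]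

lemma E2eta (ν : Measure ℝ) {x z : ℝ} (hxz : x ≠ z) :
    ∫ y, (if |y| ≤ 1 then rho2 x y z else 0) ∂ν = Smap ν (z - x) := by
  rcases lt_or_gt_of_ne hxz with hlt | hgt
  · have hu : 0 < z - x := by linarith
    have hfun : (fun y => if |y| ≤ 1 then rho2 x y z else 0)
        = (Ici (z - x) ∩ Icc (-1 : ℝ) 1).indicator (fun y => y - (z - x)) := by
      funext y
      simp only [rho2_eq_ite, Set.indicator_apply, mem_inter_iff, mem_Ici, mem_Icc, abs_le]
      split_ifs <;> (try ring) <;>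
      (exfalso; (try simp only [not_and_or, not_le, not_lt] at *); casesm* _ ∨ _, _ ∧ _ <;> linarith)
    rw [hfun, integral_indicator (measurableSet_Ici.inter measurableSet_Icc), Smap, if_pos hu]
  · have hu : z - x < 0 := by linarith
    have hfun : (fun y => if |y| ≤ 1 then rho2 x y z else 0)
        = (Iio (z - x) ∩ Icc (-1 : ℝ) 1).indicator (fun y => (z - x) - y) := by
      funext y
      simp only [rho2_eq_ite, Set.indicator_apply, mem_inter_iff, mem_Iio, mem_Icc, abs_le]
      split_ifs <;> (try ring) <;>
      (exfalso; (try simp only [not_and_or, not_le, not_lt] at *); casesm* _ ∨ _, _ ∧ _ <;> linarith)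
    rw [hfun, integral_indicator (measurableSet_Iio.inter measurableSet_Icc)]
    rw [Smap, if_neg (by linarith), if_pos hu]
    exact setIntegral_congr_edge (measurableSet_Iio.inter measurableSet_Icc)
      (measurableSet_Iic.inter measurableSet_Icc) (fun y => by
        rcases eq_or_ne y (z - x) with rfl | hy
        · right; ring
        · left
          simp only [mem_inter_iff, mem_Iio, mem_Iic, mem_Icc]
          constructor
          · rintro ⟨h1, h2⟩; exact ⟨h1.le, h2⟩
          · rintro ⟨h1, h2⟩; exact ⟨lt_of_le_of_ne h1 hy, h2⟩)

lemma E1eta (ν : Measure ℝ) {x z : ℝ} (hxz : x ≠ z) :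
    ∫ y, (if |y| ≤ 1 then 0 else rho1 x y z) ∂ν = Bmap ν (z - x) := by
  rcases lt_or_gt_of_ne hxz with hlt | hgt
  · have hu : 0 < z - x := by linarith
    have hfun : (fun y => if |y| ≤ 1 then 0 else rho1 x y z)
        = (Ioi (max (z - x) 1)).indicator (fun _ => (1 : ℝ)) := by
      funext y
      simp only [rho1_eq_ite, Set.indicator_apply, mem_Ioi, max_lt_iff, abs_le]
      split_ifs <;> (try ring) <;>
      (exfalso; (try simp only [not_and_or, not_le, not_lt] at *); casesm* _ ∨ _, _ ∧ _ <;> linarith)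
    rw [hfun, integral_indicator measurableSet_Ioi, setIntegral_const, smul_eq_mul, mul_one,
      Bmap, if_pos hu, measureReal_def]
  · have hu : z - x < 0 := by linarith
    have hfun : (fun y => if |y| ≤ 1 then 0 else rho1 x y z)
        = (Iio (min (z - x) (-1))).indicator (fun _ => (-1 : ℝ)) := by
      funext y
      simp only [rho1_eq_ite, Set.indicator_apply, mem_Iio, lt_min_iff, abs_le]
      split_ifs <;> (try ring) <;>
      (exfalso; (try simp only [not_and_or, not_le, not_lt] at *); casesm* _ ∨ _, _ ∧ _ <;> linarith)
    rw [hfun, integral_indicator measurableSet_Iio, setIntegral_const, smul_eq_mul,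
      Bmap, if_neg (by linarith), if_pos hu, measureReal_def]
    ring

end KEFAux


namespace KEFAux

section Ulemmas

lemma mul_div_self' {x z : ℝ} (hx : x ≠ 0) : x * (z / x) = z := by field_simp

lemma E2U_pos (νU : Measure ℝ) {x z : ℝ} (hz : 0 < z) (hxz : x ≠ z) :
    ∫ y in Ici (-1 : ℝ), (if |y| ≤ 1 then rho2 x (x * y) z else 0) ∂νU
      = if 0 < x then x * SUmap νU (z / x) else 0 := by
  rcases le_or_gt x 0 with hx | hx
  · rw [if_neg (not_lt.mpr hx)]
    rw [setIntegral_congr_fun measurableSet_Ici (g := fun _ => (0 : ℝ)) (fun y hy => ?_)]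
    · simp
    · simp only [mem_Ici] at hy
      split_ifs with h1
      · obtain ⟨ha, hb⟩ := abs_le.mp h1
        rw [rho2_eq_ite, if_neg, if_neg]
        · rintro ⟨hc1, hc2⟩; nlinarith
        · rintro ⟨hc1, hc2⟩; nlinarith
      · rfl
  · have hxw : x * (z / x) = z := mul_div_self' hx.ne'
    rcases lt_or_gt_of_ne hxz with hxlt | hxgt
    · -- 0 < x < z
      have hw1 : 1 < z / x := (one_lt_div hx).mpr hxlt
      have hfun : (fun y => if |y| ≤ 1 then rho2 x (x * y) z else 0)
          = (Ici (z / x - 1) ∩ Icc (-1 : ℝ) 1).indicator (fun y => x * (y - z / x + 1)) := by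
        funext y
        have hiff : z ≤ x + x * y ↔ z / x - 1 ≤ y := by
          rw [sub_le_iff_le_add, div_le_iff₀ hx]
          constructor <;> intro h <;> nlinarith
        simp only [rho2_eq_ite, Set.indicator_apply, mem_inter_iff, mem_Ici, mem_Icc,
          abs_le, hiff]
        split_ifs <;> first
          | rfl
          | linear_combination hxw
          | linear_combination -hxw
          | (exfalso; (try simp only [not_and_or, not_le, not_lt] at *);
             casesm* _ ∨ _, _ ∧ _ <;> linarith)
      rw [hfun, setIntegral_indicator (measurableSet_Ici.inter measurableSet_Icc),
        inter_eq_self_of_subset_right (fun y hy => mem_Ici.mpr (by linarith [hy.2.1] : (-1:ℝ) ≤ y)),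
        integral_const_mul, if_pos hx, SUmap, if_neg (by rintro ⟨-, hc⟩; linarith),
        if_pos hw1]
    · -- 0 < z < x
      have hw0 : 0 < z / x := div_pos hz hx
      have hw1 : z / x < 1 := (div_lt_one hx).mpr hxgt
      have hfun : (fun y => if |y| ≤ 1 then rho2 x (x * y) z else 0)
          = (Iio (z / x - 1) ∩ Icc (-1 : ℝ) 1).indicator (fun y => x * (z / x - 1 - y)) := by
        funext y
        have hiff : x + x * y < z ↔ y < z / x - 1 := by
          rw [lt_sub_iff_add_lt, lt_div_iff₀ hx]
          constructor <;> intro h <;> nlinarith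
        simp only [rho2_eq_ite, Set.indicator_apply, mem_inter_iff, mem_Iio, mem_Icc,
          abs_le, hiff]
        split_ifs <;> first
          | rfl
          | linear_combination hxw
          | linear_combination -hxw
          | (exfalso; (try simp only [not_and_or, not_le, not_lt] at *);
             casesm* _ ∨ _, _ ∧ _ <;> linarith)
      rw [hfun, setIntegral_indicator (measurableSet_Iio.inter measurableSet_Icc),
        inter_eq_self_of_subset_right (fun y hy => mem_Ici.mpr (by linarith [hy.2.1] : (-1:ℝ) ≤ y)),
        integral_const_mul, if_pos hx, SUmap, if_pos ⟨hw0.le, hw1⟩]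
      congr 1
      refine setIntegral_congr_edge (measurableSet_Iio.inter measurableSet_Icc)
        measurableSet_Icc (fun y => ?_)
      rcases eq_or_ne y (z / x - 1) with rfl | hy
      · right; ring
      · left
        simp only [mem_inter_iff, mem_Iio, mem_Icc]
        constructor
        · rintro ⟨h1, h2, h3⟩; exact ⟨h2, h1.le⟩
        · rintro ⟨h1, h2⟩; exact ⟨lt_of_le_of_ne h2 hy, h1, by linarith⟩

lemma E2U_neg (νU : Measure ℝ) {x z : ℝ} (hz : z < 0) (hxz : x ≠ z) :
    ∫ y in Ici (-1 : ℝ), (if |y| ≤ 1 then rho2 x (x * y) z else 0) ∂νU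
      = if x < 0 then |x| * SUmap νU (z / x) else 0 := by
  rcases le_or_gt 0 x with hx | hx
  · rw [if_neg (not_lt.mpr hx)]
    rw [setIntegral_congr_fun measurableSet_Ici (g := fun _ => (0 : ℝ)) (fun y hy => ?_)]
    · simp
    · simp only [mem_Ici] at hy
      split_ifs with h1
      · obtain ⟨ha, hb⟩ := abs_le.mp h1
        rw [rho2_eq_ite, if_neg, if_neg]
        · rintro ⟨hc1, hc2⟩; nlinarith
        · rintro ⟨hc1, hc2⟩; nlinarith
      · rfl
  · rw [abs_of_neg hx]
    have hxw : x * (z / x) = z := mul_div_self' hx.ne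
    rcases lt_or_gt_of_ne hxz with hxlt | hxgt
    · -- x < z < 0, so 0 < z/x < 1
      have hw0 : 0 < z / x := div_pos_of_neg_of_neg hz hx
      have hw1 : z / x < 1 := by
        rw [div_lt_one_of_neg hx]; exact hxlt
      have hfun : (fun y => if |y| ≤ 1 then rho2 x (x * y) z else 0)
          = (Icc (-1 : ℝ) (z / x - 1)).indicator (fun y => -x * (z / x - 1 - y)) := by
        funext y
        have hiff : z ≤ x + x * y ↔ y ≤ z / x - 1 := by
          rw [le_sub_iff_add_le, le_div_iff_of_neg hx]
          constructor <;> intro h <;> nlinarith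
        simp only [rho2_eq_ite, Set.indicator_apply, mem_Icc, abs_le, hiff]
        split_ifs <;> first
          | rfl
          | linear_combination hxw
          | linear_combination -hxw
          | (exfalso; (try simp only [not_and_or, not_le, not_lt] at *);
             casesm* _ ∨ _, _ ∧ _ <;> linarith)
      rw [hfun, setIntegral_indicator measurableSet_Icc,
        inter_eq_self_of_subset_right (fun y hy => mem_Ici.mpr hy.1),
        integral_const_mul, if_pos hx, SUmap, if_pos ⟨hw0.le, hw1⟩]
    · -- z < x < 0, so z/x > 1
      have hw1 : 1 < z / x := by
        rw [one_lt_div_of_neg hx]; exact hxgt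
      have hfun : (fun y => if |y| ≤ 1 then rho2 x (x * y) z else 0)
          = (Ioi (z / x - 1) ∩ Icc (-1 : ℝ) 1).indicator (fun y => -x * (y - z / x + 1)) := by
        funext y
        have hiff : x + x * y < z ↔ z / x - 1 < y := by
          rw [sub_lt_iff_lt_add, div_lt_iff_of_neg hx]
          constructor <;> intro h <;> nlinarith
        simp only [rho2_eq_ite, Set.indicator_apply, mem_inter_iff, mem_Ioi, mem_Icc,
          abs_le, hiff]
        split_ifs <;> first
          | rfl
          | linear_combination hxw
          | linear_combination -hxw
          | (exfalso; (try simp only [not_and_or, not_le, not_lt] at *);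
             casesm* _ ∨ _, _ ∧ _ <;> linarith)
      rw [hfun, setIntegral_indicator (measurableSet_Ioi.inter measurableSet_Icc),
        inter_eq_self_of_subset_right (fun y hy => mem_Ici.mpr (by linarith [hy.2.1] : (-1:ℝ) ≤ y)),
        integral_const_mul, if_pos hx, SUmap, if_neg (by rintro ⟨-, hc⟩; linarith),
        if_pos hw1]
      congr 1
      refine setIntegral_congr_edge (measurableSet_Ioi.inter measurableSet_Icc)
        (measurableSet_Ici.inter measurableSet_Icc) (fun y => ?_)
      rcases eq_or_ne y (z / x - 1) with rfl | hy
      · right; ring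
      · left
        simp only [mem_inter_iff, mem_Ioi, mem_Ici, mem_Icc]
        constructor
        · rintro ⟨h1, h2⟩; exact ⟨h1.le, h2⟩
        · rintro ⟨h1, h2⟩; exact ⟨lt_of_le_of_ne h1 (Ne.symm hy), h2⟩

lemma E1U_pos (νU : Measure ℝ) {x z : ℝ} (hz : 0 < z) :
    ∫ y in Ici (-1 : ℝ), (if |y| ≤ 1 then 0 else rho1 x (x * y) z) ∂νU
      = if 0 < x then BUmap νU (z / x) else 0 := by
  rcases le_or_gt x 0 with hx | hx
  · rw [if_neg (not_lt.mpr hx)]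
    rw [setIntegral_congr_fun measurableSet_Ici (g := fun _ => (0 : ℝ)) (fun y hy => ?_)]
    · simp
    · simp only [mem_Ici] at hy
      split_ifs with h1
      · rfl
      · have hy1 : 1 < y := by
          rcases abs_cases y with ⟨he, -⟩ | ⟨he, -⟩ <;> push_neg at h1 <;> linarith
        rw [rho1_eq_ite, if_neg, if_neg]
        · rintro ⟨hc1, hc2⟩; nlinarith
        · rintro ⟨hc1, hc2⟩; nlinarith
  · rcases le_or_gt z x with hzx | hzx
    · -- 0 < z ≤ x : integral is 0 and BUmap (z/x) = 0
      have hw1 : z / x ≤ 1 := by rw [div_le_one hx]; exact hzx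
      rw [if_pos hx, BUmap, if_neg (not_lt.mpr hw1)]
      rw [setIntegral_congr_fun measurableSet_Ici (g := fun _ => (0 : ℝ)) (fun y hy => ?_)]
      · simp
      · simp only [mem_Ici] at hy
        split_ifs with h1
        · rfl
        · have hy1 : 1 < y := by
            rcases abs_cases y with ⟨he, -⟩ | ⟨he, -⟩ <;> push_neg at h1 <;> linarith
          rw [rho1_eq_ite, if_neg, if_neg]
          · rintro ⟨hc1, hc2⟩; nlinarith
          · rintro ⟨hc1, hc2⟩; nlinarith
    · -- 0 < x < z
      have hw1 : 1 < z / x := (one_lt_div hx).mpr hzx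
      have hEq : EqOn (fun y => if |y| ≤ 1 then 0 else rho1 x (x * y) z)
          ((Ioi (max (z / x - 1) 1)).indicator (fun _ => (1 : ℝ))) (Ici (-1 : ℝ)) := by
        intro y hy
        simp only [mem_Ici] at hy
        have hiff : z < x + x * y ↔ z / x - 1 < y := by
          rw [sub_lt_iff_lt_add, div_lt_iff₀ hx]
          constructor <;> intro h <;> nlinarith
        simp only [rho1_eq_ite, Set.indicator_apply, mem_Ioi, max_lt_iff, abs_le, hiff]
        split_ifs <;> first
          | rfl
          | (exfalso; (try simp only [not_and_or, not_le, not_lt] at *);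
             casesm* _ ∨ _, _ ∧ _ <;> linarith)
      rw [setIntegral_congr_fun measurableSet_Ici hEq,
        setIntegral_indicator measurableSet_Ioi,
        inter_eq_self_of_subset_right
          (fun y (hy : y ∈ Ioi (max (z / x - 1) 1)) => mem_Ici.mpr
            (by simp only [mem_Ioi, max_lt_iff] at hy; linarith [hy.2])),
        setIntegral_const, smul_eq_mul, mul_one, if_pos hx, BUmap, if_pos hw1, measureReal_def]

lemma E1U_neg (νU : Measure ℝ) {x z : ℝ} (hz : z < 0) :
    ∫ y in Ici (-1 : ℝ), (if |y| ≤ 1 then 0 else rho1 x (x * y) z) ∂νU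
      = if x < 0 then -BUmap νU (z / x) else 0 := by
  rcases le_or_gt 0 x with hx | hx
  · rw [if_neg (not_lt.mpr hx)]
    rw [setIntegral_congr_fun measurableSet_Ici (g := fun _ => (0 : ℝ)) (fun y hy => ?_)]
    · simp
    · simp only [mem_Ici] at hy
      split_ifs with h1
      · rfl
      · have hy1 : 1 < y := by
          rcases abs_cases y with ⟨he, -⟩ | ⟨he, -⟩ <;> push_neg at h1 <;> linarith
        rw [rho1_eq_ite, if_neg, if_neg]
        · rintro ⟨hc1, hc2⟩; nlinarith
        · rintro ⟨hc1, hc2⟩; nlinarith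
  · rcases le_or_gt x z with hzx | hzx
    · -- x ≤ z < 0 : integral 0 and BUmap (z/x) = 0
      have hw1 : z / x ≤ 1 := by rw [div_le_one_of_neg hx]; exact hzx
      rw [if_pos hx, BUmap, if_neg (not_lt.mpr hw1), neg_zero]
      rw [setIntegral_congr_fun measurableSet_Ici (g := fun _ => (0 : ℝ)) (fun y hy => ?_)]
      · simp
      · simp only [mem_Ici] at hy
        split_ifs with h1
        · rfl
        · have hy1 : 1 < y := by
            rcases abs_cases y with ⟨he, -⟩ | ⟨he, -⟩ <;> push_neg at h1 <;> linarith
          rw [rho1_eq_ite, if_neg, if_neg]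
          · rintro ⟨hc1, hc2⟩; nlinarith
          · rintro ⟨hc1, hc2⟩; nlinarith
    · -- z < x < 0
      have hw1 : 1 < z / x := by rw [one_lt_div_of_neg hx]; exact hzx
      have hEq : EqOn (fun y => if |y| ≤ 1 then 0 else rho1 x (x * y) z)
          ((Ioi (max (z / x - 1) 1)).indicator (fun _ => (-1 : ℝ))) (Ici (-1 : ℝ)) := by
        intro y hy
        simp only [mem_Ici] at hy
        have hiff : x + x * y < z ↔ z / x - 1 < y := by
          rw [sub_lt_iff_lt_add, div_lt_iff_of_neg hx]
          constructor <;> intro h <;> nlinarith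
        simp only [rho1_eq_ite, Set.indicator_apply, mem_Ioi, max_lt_iff, abs_le, hiff]
        split_ifs <;> first
          | rfl
          | (exfalso; (try simp only [not_and_or, not_le, not_lt] at *);
             casesm* _ ∨ _, _ ∧ _ <;> linarith)
      rw [setIntegral_congr_fun measurableSet_Ici hEq,
        setIntegral_indicator measurableSet_Ioi,
        inter_eq_self_of_subset_right
          (fun y (hy : y ∈ Ioi (max (z / x - 1) 1)) => mem_Ici.mpr
            (by simp only [mem_Ioi, max_lt_iff] at hy; linarith [hy.2])),
        setIntegral_const, smul_eq_mul, if_pos hx, BUmap, if_pos hw1, measureReal_def]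
      ring

end Ulemmas
end KEFAux


namespace KEFAux

section Kernels

/-- second-order kernel (unscaled). -/
def K2f (f : ℝ → ℝ) (q : (ℝ × ℝ) × ℝ) : ℝ :=
  if |q.1.2| ≤ 1 then deriv (deriv f) q.2 * rho2 q.1.1 q.1.2 q.2 else 0

def K1f (f : ℝ → ℝ) (q : (ℝ × ℝ) × ℝ) : ℝ :=
  if |q.1.2| ≤ 1 then 0 else deriv f q.2 * rho1 q.1.1 q.1.2 q.2

def K2Uf (f : ℝ → ℝ) (q : (ℝ × ℝ) × ℝ) : ℝ :=
  if |q.1.2| ≤ 1 then deriv (deriv f) q.2 * rho2 q.1.1 (q.1.1 * q.1.2) q.2 else 0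

def K1Uf (f : ℝ → ℝ) (q : (ℝ × ℝ) × ℝ) : ℝ :=
  if |q.1.2| ≤ 1 then 0 else deriv f q.2 * rho1 q.1.1 (q.1.1 * q.1.2) q.2

lemma measurable_rho2_comp {α : Type*} [MeasurableSpace α] {a b c : α → ℝ}
    (ha : Measurable a) (hb : Measurable b) (hc : Measurable c) :
    Measurable fun q => rho2 (a q) (b q) (c q) := by
  simp only [rho2_eq_ite]
  exact Measurable.ite
    ((measurableSet_lt ha hc).inter (measurableSet_le hc (ha.add hb)))
    (((ha.add hb).sub hc))
    (Measurable.ite ((measurableSet_lt (ha.add hb) hc).inter (measurableSet_le hc ha))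
      (hc.sub (ha.add hb)) measurable_const)

lemma measurable_rho1_comp {α : Type*} [MeasurableSpace α] {a b c : α → ℝ}
    (ha : Measurable a) (hb : Measurable b) (hc : Measurable c) :
    Measurable fun q => rho1 (a q) (b q) (c q) := by
  simp only [rho1_eq_ite]
  exact Measurable.ite
    ((measurableSet_lt ha hc).inter (measurableSet_lt hc (ha.add hb)))
    measurable_const
    (Measurable.ite ((measurableSet_lt (ha.add hb) hc).inter (measurableSet_lt hc ha))
      measurable_const measurable_const)

section KernelFacts

variable {f : ℝ → ℝ} (hf : ContDiff ℝ (⊤ : ℕ∞) f)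

lemma absSet_measurable : MeasurableSet {q : (ℝ × ℝ) × ℝ | |q.1.2| ≤ 1} :=
  measurableSet_le (measurable_fst.snd.abs) measurable_const

include hf in
lemma measurable_K2f : Measurable (K2f f) := by
  unfold K2f
  exact Measurable.ite absSet_measurable
    (((cont_deriv2 hf).measurable.comp measurable_snd).mul
      (measurable_rho2_comp measurable_fst.fst measurable_fst.snd measurable_snd))
    measurable_const

include hf in
lemma measurable_K1f : Measurable (K1f f) := by
  unfold K1f
  exact Measurable.ite absSet_measurable measurable_const
    (((cont_deriv hf).measurable.comp measurable_snd).mul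
      (measurable_rho1_comp measurable_fst.fst measurable_fst.snd measurable_snd))

include hf in
lemma measurable_K2Uf : Measurable (K2Uf f) := by
  unfold K2Uf
  exact Measurable.ite absSet_measurable
    (((cont_deriv2 hf).measurable.comp measurable_snd).mul
      (measurable_rho2_comp measurable_fst.fst (measurable_fst.fst.mul measurable_fst.snd)
        measurable_snd))
    measurable_const

include hf in
lemma measurable_K1Uf : Measurable (K1Uf f) := by
  unfold K1Uf
  exact Measurable.ite absSet_measurable measurable_const
    (((cont_deriv hf).measurable.comp measurable_snd).mul
      (measurable_rho1_comp measurable_fst.fst (measurable_fst.fst.mul measurable_fst.snd)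
        measurable_snd))

end KernelFacts

/-- Generic product-integrability criterion for our kernels. -/
lemma integrable_kernel_prod {P : Measure (ℝ × ℝ)} [SFinite P] {K : (ℝ × ℝ) × ℝ → ℝ}
    (hmeas : Measurable K) (hslice : ∀ p, Integrable (fun z => K (p, z)))
    {C : ℝ} (hbound : ∀ p : ℝ × ℝ, ∫ z, ‖K (p, z)‖ ≤ C * min 1 (p.2 ^ 2))
    (hmin : Integrable (fun p : ℝ × ℝ => min 1 (p.2 ^ 2)) P) :
    Integrable K (P.prod volume) := by
  refine (integrable_prod_iff hmeas.aestronglyMeasurable).mpr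
    ⟨Eventually.of_forall hslice, ?_⟩
  refine Integrable.mono' (hmin.const_mul C)
    (hmeas.aestronglyMeasurable.norm.integral_prod_right')
    (Eventually.of_forall fun p => ?_)
  rw [Real.norm_eq_abs, abs_of_nonneg (integral_nonneg fun z => norm_nonneg _)]
  exact hbound p

lemma integrable_min_sq_prod {μ ν : Measure ℝ} [IsFiniteMeasure μ] [SFinite ν]
    (hmin : Integrable (fun y => min 1 (y ^ 2)) ν) :
    Integrable (fun p : ℝ × ℝ => min 1 (p.2 ^ 2)) (μ.prod ν) := by
  have := (integrable_const (1 : ℝ) (μ := μ)).mul_prod hmin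
  simpa using this

end Kernels
end KEFAux


namespace KEFAux

lemma ae_atoms (μ : Measure ℝ) [SFinite μ] : ∀ᵐ z ∂(volume : Measure ℝ), μ {z} = 0 := by
  have hcnt : Set.Countable {t : ℝ | 0 < μ {a : ℝ | a = t}} :=
    Measure.countable_meas_level_set_pos measurable_id
  rw [ae_iff]
  refine measure_mono_null (fun z hz => ?_) (hcnt.measure_zero volume)
  simp only [mem_setOf_eq] at hz ⊢
  have : {a : ℝ | a = z} = {z} := by ext a; simp
  rw [this]
  exact pos_iff_ne_zero.mpr hz

section MainParts

variable {f : ℝ → ℝ} {M0 M1 M2 R : ℝ}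

/-- The η-side master lemma. -/
lemma eta_part (hf : ContDiff ℝ (⊤ : ℕ∞) f)
    (hM0 : ∀ z, |f z| ≤ M0) (hM1 : ∀ z, |deriv f z| ≤ M1)
    (hM2 : ∀ z, |deriv (deriv f) z| ≤ M2)
    (hR1 : 1 ≤ R) (hRf1 : ∀ z, R < |z| → deriv f z = 0)
    (μ ν : Measure ℝ) [IsProbabilityMeasure μ] (hν : IsLevyMeasure ν) :
    Integrable (fun p : ℝ × ℝ =>
        f (p.1 + p.2) - f p.1 - (if |p.2| ≤ 1 then p.2 * deriv f p.1 else 0)) (μ.prod ν) ∧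
    Integrable (fun z => deriv (deriv f) z * convM (Smap ν) μ z) ∧
    Integrable (fun z => deriv f z * convM (Bmap ν) μ z) ∧
    ∫ p : ℝ × ℝ, (f (p.1 + p.2) - f p.1 - (if |p.2| ≤ 1 then p.2 * deriv f p.1 else 0))
        ∂(μ.prod ν)
      = (∫ z, deriv (deriv f) z * convM (Smap ν) μ z)
        + ∫ z, deriv f z * convM (Bmap ν) μ z := by
  haveI : SigmaFinite ν := levy_sigmaFinite hν
  have hM0' : 0 ≤ M0 := le_trans (abs_nonneg _) (hM0 0)
  have hM2' : 0 ≤ M2 := le_trans (abs_nonneg _) (hM2 0)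
  have hM1' : 0 ≤ M1 := le_trans (abs_nonneg _) (hM1 0)
  set P := μ.prod ν with hP
  -- product integrability of kernels
  have hslice2 : ∀ p : ℝ × ℝ, Integrable (fun z => K2f f (p, z)) := by
    intro p
    by_cases h : |p.2| ≤ 1
    · have : (fun z => K2f f (p, z)) = fun z => deriv (deriv f) z * rho2 p.1 p.2 z :=
        funext fun z => by simp [K2f, h]
      rw [this]
      exact bdd_mul_integrable (cont_deriv2 hf).measurable hM2 (integrable_rho2 _ _)
    · have : (fun z => K2f f (p, z)) = fun _ => (0 : ℝ) := funext fun z => by simp [K2f, h]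
      rw [this]; exact integrable_zero _ _ _
  have hslice1 : ∀ p : ℝ × ℝ, Integrable (fun z => K1f f (p, z)) := by
    intro p
    by_cases h : |p.2| ≤ 1
    · have : (fun z => K1f f (p, z)) = fun _ => (0 : ℝ) := funext fun z => by simp [K1f, h]
      rw [this]; exact integrable_zero _ _ _
    · have : (fun z => K1f f (p, z)) = fun z => deriv f z * rho1 p.1 p.2 z :=
        funext fun z => by simp [K1f, h]
      rw [this]
      exact bdd_mul_integrable (cont_deriv hf).measurable hM1 (integrable_rho1 _ _)
  have hK2P : Integrable (K2f f) (P.prod volume) := by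
    refine integrable_kernel_prod (measurable_K2f hf) hslice2 (C := M2 / 2) (fun p => ?_)
      (integrable_min_sq_prod (levy_integrable_min hν))
    by_cases h : |p.2| ≤ 1
    · have : (fun z => ‖K2f f (p, z)‖) = fun z => ‖deriv (deriv f) z * rho2 p.1 p.2 z‖ :=
        funext fun z => by simp [K2f, h]
      rw [this]
      have hmin : min 1 (p.2 ^ 2) = p.2 ^ 2 :=
        min_eq_right (by nlinarith [abs_nonneg p.2, sq_abs p.2])
      calc ∫ z, ‖deriv (deriv f) z * rho2 p.1 p.2 z‖ ≤ M2 * (p.2 ^ 2 / 2) :=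
            integral_norm_mul_rho2_le (cont_deriv2 hf).measurable hM2 p.1 p.2
        _ = M2 / 2 * min 1 (p.2 ^ 2) := by rw [hmin]; ring
    · have : (fun z => ‖K2f f (p, z)‖) = fun _ => (0 : ℝ) :=
        funext fun z => by simp [K2f, h]
      rw [this, integral_zero]
      positivity
  have hK1P : Integrable (K1f f) (P.prod volume) := by
    refine integrable_kernel_prod (measurable_K1f hf) hslice1 (C := M1 * (2 * R)) (fun p => ?_)
      (integrable_min_sq_prod (levy_integrable_min hν))
    by_cases h : |p.2| ≤ 1
    · have : (fun z => ‖K1f f (p, z)‖) = fun _ => (0 : ℝ) :=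
        funext fun z => by simp [K1f, h]
      rw [this, integral_zero]
      positivity
    · have : (fun z => ‖K1f f (p, z)‖) = fun z => ‖deriv f z * rho1 p.1 p.2 z‖ :=
        funext fun z => by simp [K1f, h]
      rw [this]
      have hmin : min 1 (p.2 ^ 2) = 1 := by
        push_neg at h
        exact min_eq_left (by nlinarith [abs_nonneg p.2, sq_abs p.2])
      calc ∫ z, ‖deriv f z * rho1 p.1 p.2 z‖ ≤ M1 * (2 * R) :=
            integral_norm_mul_rho1_le (cont_deriv hf).measurable hM1 hRf1
              (by linarith) p.1 p.2
        _ = M1 * (2 * R) * min 1 (p.2 ^ 2) := by rw [hmin, mul_one]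
  -- integrability of g on the product
  have hgmeas : Measurable (fun p : ℝ × ℝ =>
      f (p.1 + p.2) - f p.1 - (if |p.2| ≤ 1 then p.2 * deriv f p.1 else 0)) := by
    refine Measurable.sub (Measurable.sub ?_ ?_) ?_
    · exact (hf.continuous.comp (continuous_fst.add continuous_snd)).measurable
    · exact hf.continuous.measurable.comp measurable_fst
    · exact Measurable.ite (measurableSet_le measurable_snd.abs measurable_const)
        (measurable_snd.mul ((cont_deriv hf).measurable.comp measurable_fst))
        measurable_const
  have hgbound : ∀ p : ℝ × ℝ,
      ‖f (p.1 + p.2) - f p.1 - (if |p.2| ≤ 1 then p.2 * deriv f p.1 else 0)‖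
        ≤ (2 * M0 + M2 / 2) * min 1 (p.2 ^ 2) := by
    intro p
    by_cases h : |p.2| ≤ 1
    · have hmin : min 1 (p.2 ^ 2) = p.2 ^ 2 :=
        min_eq_right (by nlinarith [abs_nonneg p.2, sq_abs p.2])
      rw [if_pos h, ftc2 hf p.1 p.2]
      calc ‖∫ z, deriv (deriv f) z * rho2 p.1 p.2 z‖
          ≤ ∫ z, ‖deriv (deriv f) z * rho2 p.1 p.2 z‖ := norm_integral_le_integral_norm _
        _ ≤ M2 * (p.2 ^ 2 / 2) :=
            integral_norm_mul_rho2_le (cont_deriv2 hf).measurable hM2 p.1 p.2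
        _ ≤ (2 * M0 + M2 / 2) * min 1 (p.2 ^ 2) := by rw [hmin]; nlinarith [sq_nonneg p.2]
    · have hmin : min 1 (p.2 ^ 2) = 1 := by
        push_neg at h
        exact min_eq_left (by nlinarith [abs_nonneg p.2, sq_abs p.2])
      rw [if_neg h, hmin, mul_one, sub_zero, Real.norm_eq_abs]
      calc |f (p.1 + p.2) - f p.1| ≤ |f (p.1 + p.2)| + |f p.1| := abs_sub _ _
        _ ≤ 2 * M0 + M2 / 2 := by linarith [hM0 (p.1 + p.2), hM0 p.1]
  have hgP : Integrable (fun p : ℝ × ℝ =>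
      f (p.1 + p.2) - f p.1 - (if |p.2| ≤ 1 then p.2 * deriv f p.1 else 0)) P := by
    refine Integrable.mono'
      ((integrable_min_sq_prod (levy_integrable_min hν)).const_mul (2 * M0 + M2 / 2))
      hgmeas.aestronglyMeasurable (Eventually.of_forall hgbound)
  -- decomposition
  have hdecomp : ∀ p : ℝ × ℝ,
      f (p.1 + p.2) - f p.1 - (if |p.2| ≤ 1 then p.2 * deriv f p.1 else 0)
        = (∫ z, K2f f (p, z)) + ∫ z, K1f f (p, z) := by
    intro p
    by_cases h : |p.2| ≤ 1
    · have e2 : (fun z => K2f f (p, z)) = fun z => deriv (deriv f) z * rho2 p.1 p.2 z :=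
        funext fun z => by simp [K2f, h]
      have e1 : (fun z => K1f f (p, z)) = fun _ => (0 : ℝ) := funext fun z => by simp [K1f, h]
      rw [e2, e1, integral_zero, add_zero, if_pos h, ftc2 hf p.1 p.2]
    · have e2 : (fun z => K2f f (p, z)) = fun _ => (0 : ℝ) := funext fun z => by simp [K2f, h]
      have e1 : (fun z => K1f f (p, z)) = fun z => deriv f z * rho1 p.1 p.2 z :=
        funext fun z => by simp [K1f, h]
      rw [e2, e1, integral_zero, zero_add, if_neg h, sub_zero, ftc1 hf p.1 p.2]
  have hK2i : Integrable (fun p => ∫ z, K2f f (p, z)) P := by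
    simpa using hK2P.integral_prod_left
  have hK1i : Integrable (fun p => ∫ z, K1f f (p, z)) P := by
    simpa using hK1P.integral_prod_left
  have hswap2 : ∫ p, (∫ z, K2f f (p, z)) ∂P = ∫ z, (∫ p, K2f f (p, z) ∂P) := by
    exact integral_integral_swap (f := fun (p : ℝ × ℝ) (z : ℝ) => K2f f (p, z)) hK2P
  have hswap1 : ∫ p, (∫ z, K1f f (p, z)) ∂P = ∫ z, (∫ p, K1f f (p, z) ∂P) := by
    exact integral_integral_swap (f := fun (p : ℝ × ℝ) (z : ℝ) => K1f f (p, z)) hK1P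
  have haeS2 : ∀ᵐ z ∂(volume : Measure ℝ), Integrable (fun p => K2f f (p, z)) P := by
    simpa using hK2P.swap.prod_right_ae
  have haeS1 : ∀ᵐ z ∂(volume : Measure ℝ), Integrable (fun p => K1f f (p, z)) P := by
    simpa using hK1P.swap.prod_right_ae
  have hid2 : (fun z => ∫ p, K2f f (p, z) ∂P)
      =ᵐ[volume] fun z => deriv (deriv f) z * convM (Smap ν) μ z := by
    filter_upwards [haeS2, ae_atoms μ] with z hz1 hz2
    have hxne : ∀ᵐ x ∂μ, x ≠ z := by
      rw [ae_iff]
      convert hz2 using 2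
      ext x; simp
    calc ∫ p, K2f f (p, z) ∂P = ∫ x, (∫ y, K2f f ((x, y), z) ∂ν) ∂μ := integral_prod _ hz1
      _ = ∫ x, deriv (deriv f) z * Smap ν (z - x) ∂μ := by
          refine integral_congr_ae (hxne.mono fun x hx => ?_)
          have e : (fun y => K2f f ((x, y), z))
              = fun y => deriv (deriv f) z * (if |y| ≤ 1 then rho2 x y z else 0) :=
            funext fun y => by simp only [K2f]; split_ifs <;> simp
          dsimp only
          rw [e, integral_const_mul, E2eta ν hx]
      _ = deriv (deriv f) z * convM (Smap ν) μ z := by rw [integral_const_mul]; rfl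
  have hid1 : (fun z => ∫ p, K1f f (p, z) ∂P)
      =ᵐ[volume] fun z => deriv f z * convM (Bmap ν) μ z := by
    filter_upwards [haeS1, ae_atoms μ] with z hz1 hz2
    have hxne : ∀ᵐ x ∂μ, x ≠ z := by
      rw [ae_iff]
      convert hz2 using 2
      ext x; simp
    calc ∫ p, K1f f (p, z) ∂P = ∫ x, (∫ y, K1f f ((x, y), z) ∂ν) ∂μ := integral_prod _ hz1
      _ = ∫ x, deriv f z * Bmap ν (z - x) ∂μ := by
          refine integral_congr_ae (hxne.mono fun x hx => ?_)
          have e : (fun y => K1f f ((x, y), z))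
              = fun y => deriv f z * (if |y| ≤ 1 then 0 else rho1 x y z) :=
            funext fun y => by simp only [K1f]; split_ifs <;> simp
          dsimp only
          rw [e, integral_const_mul, E1eta ν hx]
      _ = deriv f z * convM (Bmap ν) μ z := by rw [integral_const_mul]; rfl
  have hZ2 : Integrable (fun z => ∫ p, K2f f (p, z) ∂P) := by
    simpa using hK2P.swap.integral_prod_left
  have hZ1 : Integrable (fun z => ∫ p, K1f f (p, z) ∂P) := by
    simpa using hK1P.swap.integral_prod_left
  refine ⟨hgP, hZ2.congr hid2, hZ1.congr hid1, ?_⟩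
  calc ∫ p : ℝ × ℝ, (f (p.1 + p.2) - f p.1 - (if |p.2| ≤ 1 then p.2 * deriv f p.1 else 0)) ∂P
      = ∫ p, ((∫ z, K2f f (p, z)) + ∫ z, K1f f (p, z)) ∂P :=
        integral_congr_ae (Eventually.of_forall hdecomp)
    _ = (∫ p, (∫ z, K2f f (p, z)) ∂P) + ∫ p, (∫ z, K1f f (p, z)) ∂P :=
        integral_add hK2i hK1i
    _ = (∫ z, (∫ p, K2f f (p, z) ∂P)) + ∫ z, (∫ p, K1f f (p, z) ∂P) := by
        rw [hswap2, hswap1]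
    _ = (∫ z, deriv (deriv f) z * convM (Smap ν) μ z)
        + ∫ z, deriv f z * convM (Bmap ν) μ z := by
        rw [integral_congr_ae hid2, integral_congr_ae hid1]

end MainParts
end KEFAux


namespace KEFAux

section UPart

variable {f : ℝ → ℝ} {M0 M1 M2 R : ℝ}

/-- pointwise bound for the scaled integrand. -/
lemma gU_bound (hf : ContDiff ℝ (⊤ : ℕ∞) f)
    (hM0 : ∀ z, |f z| ≤ M0) (hM2 : ∀ z, |deriv (deriv f) z| ≤ M2)
    (hR1 : 1 ≤ R) (hRf : ∀ z, R < |z| → f z = 0) (hRf1 : ∀ z, R < |z| → deriv f z = 0)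
    (x y : ℝ) :
    |f (x + x * y) - f x - (if |y| ≤ 1 then x * y * deriv f x else 0)|
      ≤ (6 * M0 + 2 * M2 * R ^ 2) * min 1 (y ^ 2) := by
  have hM0' : 0 ≤ M0 := le_trans (abs_nonneg _) (hM0 0)
  have hM2' : 0 ≤ M2 := le_trans (abs_nonneg _) (hM2 0)
  by_cases h : |y| ≤ 1
  · have hmin : min 1 (y ^ 2) = y ^ 2 := min_eq_right (by nlinarith [abs_nonneg y, sq_abs y])
    rcases le_or_gt |x| (2 * R) with hx | hx
    · rw [if_pos h, ftc2 hf x (x * y)]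
      calc |∫ z, deriv (deriv f) z * rho2 x (x * y) z|
          ≤ ∫ z, ‖deriv (deriv f) z * rho2 x (x * y) z‖ := by
            rw [← Real.norm_eq_abs]; exact norm_integral_le_integral_norm _
        _ ≤ M2 * ((x * y) ^ 2 / 2) :=
            integral_norm_mul_rho2_le (cont_deriv2 hf).measurable hM2 x (x * y)
        _ ≤ (6 * M0 + 2 * M2 * R ^ 2) * min 1 (y ^ 2) := by
            rw [hmin]
            have h2 : x ^ 2 ≤ 4 * R ^ 2 := by nlinarith [abs_nonneg x, sq_abs x]
            nlinarith [sq_nonneg y, mul_nonneg hM2' (sq_nonneg y)]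
    · have hfx : f x = 0 := hRf x (by linarith)
      have hfx' : deriv f x = 0 := hRf1 x (by linarith)
      have hexpr : f (x + x * y) - f x - (if |y| ≤ 1 then x * y * deriv f x else 0)
          = f (x + x * y) := by rw [hfx, hfx', if_pos h]; ring
      rw [hexpr]
      by_cases hz : f (x + x * y) = 0
      · rw [hz, abs_zero]; positivity
      · have hxy : |x + x * y| ≤ R := not_lt.mp (fun hc => hz (hRf _ hc))
        obtain ⟨ha1, ha2⟩ := abs_le.mp hxy
        obtain ⟨hy1, hy2⟩ := abs_le.mp h
        have hy' : y ≤ -(1/2) := by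
          rcases abs_cases x with ⟨he, -⟩ | ⟨he, -⟩
          · nlinarith
          · nlinarith
        have hmin4 : (1 : ℝ) / 4 ≤ min 1 (y ^ 2) := by rw [hmin]; nlinarith
        calc |f (x + x * y)| ≤ M0 := hM0 _
          _ ≤ (6 * M0 + 2 * M2 * R ^ 2) * min 1 (y ^ 2) := by
              nlinarith [mul_nonneg hM2' (sq_nonneg R)]
  · have hmin : min 1 (y ^ 2) = 1 := by
      push_neg at h
      exact min_eq_left (by nlinarith [abs_nonneg y, sq_abs y])
    rw [if_neg h, hmin, mul_one, sub_zero]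
    calc |f (x + x * y) - f x| ≤ |f (x + x * y)| + |f x| := abs_sub _ _
      _ ≤ 6 * M0 + 2 * M2 * R ^ 2 := by
          nlinarith [hM0 (x + x * y), hM0 x, mul_nonneg hM2' (sq_nonneg R)]

lemma gU_measurable (hf : ContDiff ℝ (⊤ : ℕ∞) f) :
    Measurable (fun p : ℝ × ℝ =>
      f (p.1 + p.1 * p.2) - f p.1 - (if |p.2| ≤ 1 then p.1 * p.2 * deriv f p.1 else 0)) := by
  refine Measurable.sub (Measurable.sub ?_ ?_) ?_
  · exact (hf.continuous.comp (continuous_fst.add (continuous_fst.mul continuous_snd))).measurable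
  · exact hf.continuous.measurable.comp measurable_fst
  · exact Measurable.ite (measurableSet_le measurable_snd.abs measurable_const)
      ((measurable_fst.mul measurable_snd).mul
        ((cont_deriv hf).measurable.comp measurable_fst))
      measurable_const

/-- The U-side master lemma. -/
lemma U_part (hf : ContDiff ℝ (⊤ : ℕ∞) f)
    (hM0 : ∀ z, |f z| ≤ M0) (hM1 : ∀ z, |deriv f z| ≤ M1)
    (hM2 : ∀ z, |deriv (deriv f) z| ≤ M2)
    (hR1 : 1 ≤ R) (hRf : ∀ z, R < |z| → f z = 0) (hRf1 : ∀ z, R < |z| → deriv f z = 0)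
    (hRf2 : ∀ z, R < |z| → deriv (deriv f) z = 0)
    (μ νU : Measure ℝ) [IsProbabilityMeasure μ] (hνU : IsLevyMeasure νU) :
    Integrable (fun p : ℝ × ℝ =>
        f (p.1 + p.1 * p.2) - f p.1 - (if |p.2| ≤ 1 then p.1 * p.2 * deriv f p.1 else 0))
      (μ.prod (νU.restrict (Ici (-1)))) ∧
    Integrable (fun z => deriv (deriv f) z * rmu νU μ z) ∧
    Integrable (fun z => deriv f z * kmu νU μ z) ∧
    ∫ p : ℝ × ℝ, (f (p.1 + p.1 * p.2) - f p.1
          - (if |p.2| ≤ 1 then p.1 * p.2 * deriv f p.1 else 0))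
        ∂(μ.prod (νU.restrict (Ici (-1))))
      = (∫ z, deriv (deriv f) z * rmu νU μ z) + ∫ z, deriv f z * kmu νU μ z := by
  haveI : SigmaFinite νU := levy_sigmaFinite hνU
  have hM0' : 0 ≤ M0 := le_trans (abs_nonneg _) (hM0 0)
  have hM2' : 0 ≤ M2 := le_trans (abs_nonneg _) (hM2 0)
  have hM1' : 0 ≤ M1 := le_trans (abs_nonneg _) (hM1 0)
  have hminr : Integrable (fun y => min 1 (y ^ 2)) (νU.restrict (Ici (-1))) :=
    (levy_integrable_min hνU).restrict
  set Q := μ.prod (νU.restrict (Ici (-1))) with hQdef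
  have hslice2 : ∀ p : ℝ × ℝ, Integrable (fun z => K2Uf f (p, z)) := by
    intro p
    by_cases h : |p.2| ≤ 1
    · have : (fun z => K2Uf f (p, z)) = fun z => deriv (deriv f) z * rho2 p.1 (p.1 * p.2) z :=
        funext fun z => by simp [K2Uf, h]
      rw [this]
      exact bdd_mul_integrable (cont_deriv2 hf).measurable hM2 (integrable_rho2 _ _)
    · have : (fun z => K2Uf f (p, z)) = fun _ => (0 : ℝ) := funext fun z => by simp [K2Uf, h]
      rw [this]; exact integrable_zero _ _ _
  have hslice1 : ∀ p : ℝ × ℝ, Integrable (fun z => K1Uf f (p, z)) := by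
    intro p
    by_cases h : |p.2| ≤ 1
    · have : (fun z => K1Uf f (p, z)) = fun _ => (0 : ℝ) := funext fun z => by simp [K1Uf, h]
      rw [this]; exact integrable_zero _ _ _
    · have : (fun z => K1Uf f (p, z)) = fun z => deriv f z * rho1 p.1 (p.1 * p.2) z :=
        funext fun z => by simp [K1Uf, h]
      rw [this]
      exact bdd_mul_integrable (cont_deriv hf).measurable hM1 (integrable_rho1 _ _)
  have hK2Q : Integrable (K2Uf f) (Q.prod volume) := by
    refine integrable_kernel_prod (measurable_K2Uf hf) hslice2 (C := 24 * (M2 * R ^ 2))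
      (fun p => ?_) (integrable_min_sq_prod hminr)
    by_cases h : |p.2| ≤ 1
    · have : (fun z => ‖K2Uf f (p, z)‖) = fun z => ‖deriv (deriv f) z * rho2 p.1 (p.1 * p.2) z‖ :=
        funext fun z => by simp [K2Uf, h]
      rw [this]
      exact intnorm_K2U_le (cont_deriv2 hf).measurable hM2 hRf2 hR1 p.1 p.2 h
    · have : (fun z => ‖K2Uf f (p, z)‖) = fun _ => (0 : ℝ) := funext fun z => by simp [K2Uf, h]
      rw [this, integral_zero]
      positivity
  have hK1Q : Integrable (K1Uf f) (Q.prod volume) := by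
    refine integrable_kernel_prod (measurable_K1Uf hf) hslice1 (C := M1 * (2 * R))
      (fun p => ?_) (integrable_min_sq_prod hminr)
    by_cases h : |p.2| ≤ 1
    · have : (fun z => ‖K1Uf f (p, z)‖) = fun _ => (0 : ℝ) := funext fun z => by simp [K1Uf, h]
      rw [this, integral_zero]
      positivity
    · have : (fun z => ‖K1Uf f (p, z)‖) = fun z => ‖deriv f z * rho1 p.1 (p.1 * p.2) z‖ :=
        funext fun z => by simp [K1Uf, h]
      rw [this]
      have hmin : min 1 (p.2 ^ 2) = 1 := by
        push_neg at h
        exact min_eq_left (by nlinarith [abs_nonneg p.2, sq_abs p.2])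
      calc ∫ z, ‖deriv f z * rho1 p.1 (p.1 * p.2) z‖ ≤ M1 * (2 * R) :=
            integral_norm_mul_rho1_le (cont_deriv hf).measurable hM1 hRf1
              (by linarith) p.1 (p.1 * p.2)
        _ = M1 * (2 * R) * min 1 (p.2 ^ 2) := by rw [hmin, mul_one]
  have hgQ : Integrable (fun p : ℝ × ℝ =>
      f (p.1 + p.1 * p.2) - f p.1 - (if |p.2| ≤ 1 then p.1 * p.2 * deriv f p.1 else 0)) Q := by
    refine Integrable.mono'
      ((integrable_min_sq_prod hminr).const_mul (6 * M0 + 2 * M2 * R ^ 2))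
      (gU_measurable hf).aestronglyMeasurable (Eventually.of_forall fun p => ?_)
    rw [Real.norm_eq_abs]
    exact gU_bound hf hM0 hM2 hR1 hRf hRf1 p.1 p.2
  have hdecomp : ∀ p : ℝ × ℝ,
      f (p.1 + p.1 * p.2) - f p.1 - (if |p.2| ≤ 1 then p.1 * p.2 * deriv f p.1 else 0)
        = (∫ z, K2Uf f (p, z)) + ∫ z, K1Uf f (p, z) := by
    intro p
    by_cases h : |p.2| ≤ 1
    · have e2 : (fun z => K2Uf f (p, z)) = fun z => deriv (deriv f) z * rho2 p.1 (p.1 * p.2) z :=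
        funext fun z => by simp [K2Uf, h]
      have e1 : (fun z => K1Uf f (p, z)) = fun _ => (0 : ℝ) := funext fun z => by simp [K1Uf, h]
      rw [e2, e1, integral_zero, add_zero, if_pos h, ← ftc2 hf p.1 (p.1 * p.2)]
    · have e2 : (fun z => K2Uf f (p, z)) = fun _ => (0 : ℝ) := funext fun z => by simp [K2Uf, h]
      have e1 : (fun z => K1Uf f (p, z)) = fun z => deriv f z * rho1 p.1 (p.1 * p.2) z :=
        funext fun z => by simp [K1Uf, h]
      rw [e2, e1, integral_zero, zero_add, if_neg h, sub_zero, ftc1 hf p.1 (p.1 * p.2)]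
  have hK2i : Integrable (fun p => ∫ z, K2Uf f (p, z)) Q := by
    simpa using hK2Q.integral_prod_left
  have hK1i : Integrable (fun p => ∫ z, K1Uf f (p, z)) Q := by
    simpa using hK1Q.integral_prod_left
  have hswap2 : ∫ p, (∫ z, K2Uf f (p, z)) ∂Q = ∫ z, (∫ p, K2Uf f (p, z) ∂Q) :=
    integral_integral_swap (f := fun (p : ℝ × ℝ) (z : ℝ) => K2Uf f (p, z)) hK2Q
  have hswap1 : ∫ p, (∫ z, K1Uf f (p, z)) ∂Q = ∫ z, (∫ p, K1Uf f (p, z) ∂Q) :=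
    integral_integral_swap (f := fun (p : ℝ × ℝ) (z : ℝ) => K1Uf f (p, z)) hK1Q
  have haeS2 : ∀ᵐ z ∂(volume : Measure ℝ), Integrable (fun p => K2Uf f (p, z)) Q := by
    simpa using hK2Q.swap.prod_right_ae
  have haeS1 : ∀ᵐ z ∂(volume : Measure ℝ), Integrable (fun p => K1Uf f (p, z)) Q := by
    simpa using hK1Q.swap.prod_right_ae
  have haeZ : ∀ᵐ z ∂(volume : Measure ℝ), z ≠ (0 : ℝ) := by
    have h0 : (volume : Measure ℝ) {0} = 0 := Real.volume_singleton
    rw [ae_iff]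
    convert h0 using 2
    ext x; simp
  have hid2 : (fun z => ∫ p, K2Uf f (p, z) ∂Q)
      =ᵐ[volume] fun z => deriv (deriv f) z * rmu νU μ z := by
    filter_upwards [haeS2, ae_atoms μ, haeZ] with z hz1 hz2 hz0
    have hxne : ∀ᵐ x ∂μ, x ≠ z := by
      rw [ae_iff]
      convert hz2 using 2
      ext x; simp
    rcases lt_or_gt_of_ne hz0 with hzneg | hzpos
    · calc ∫ p, K2Uf f (p, z) ∂Q
          = ∫ x, (∫ y, K2Uf f ((x, y), z) ∂(νU.restrict (Ici (-1)))) ∂μ := integral_prod _ hz1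
        _ = ∫ x, deriv (deriv f) z * (if x < 0 then |x| * SUmap νU (z / x) else 0) ∂μ := by
            refine integral_congr_ae (hxne.mono fun x hx => ?_)
            have e : (fun y => K2Uf f ((x, y), z))
                = fun y => deriv (deriv f) z * (if |y| ≤ 1 then rho2 x (x * y) z else 0) :=
              funext fun y => by simp only [K2Uf]; split_ifs <;> simp
            dsimp only
            rw [e, integral_const_mul, E2U_neg νU hzneg hx]
        _ = deriv (deriv f) z * rmu νU μ z := by
            rw [integral_const_mul]
            congr 1
            rw [rmu, if_neg (by linarith), if_pos hzneg,
              ← integral_indicator measurableSet_Iio]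
            refine integral_congr_ae (Eventually.of_forall fun x => ?_)
            by_cases hx : x < 0 <;> simp [Set.indicator_apply, hx]
    · calc ∫ p, K2Uf f (p, z) ∂Q
          = ∫ x, (∫ y, K2Uf f ((x, y), z) ∂(νU.restrict (Ici (-1)))) ∂μ := integral_prod _ hz1
        _ = ∫ x, deriv (deriv f) z * (if 0 < x then x * SUmap νU (z / x) else 0) ∂μ := by
            refine integral_congr_ae (hxne.mono fun x hx => ?_)
            have e : (fun y => K2Uf f ((x, y), z))
                = fun y => deriv (deriv f) z * (if |y| ≤ 1 then rho2 x (x * y) z else 0) :=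
              funext fun y => by simp only [K2Uf]; split_ifs <;> simp
            dsimp only
            rw [e, integral_const_mul, E2U_pos νU hzpos hx]
        _ = deriv (deriv f) z * rmu νU μ z := by
            rw [integral_const_mul]
            congr 1
            rw [rmu, if_pos hzpos, ← integral_indicator measurableSet_Ioi]
            refine integral_congr_ae (Eventually.of_forall fun x => ?_)
            by_cases hx : 0 < x <;> simp [Set.indicator_apply, hx]
  have hid1 : (fun z => ∫ p, K1Uf f (p, z) ∂Q)
      =ᵐ[volume] fun z => deriv f z * kmu νU μ z := by
    filter_upwards [haeS1, ae_atoms μ, haeZ] with z hz1 hz2 hz0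
    have hxne : ∀ᵐ x ∂μ, x ≠ z := by
      rw [ae_iff]
      convert hz2 using 2
      ext x; simp
    rcases lt_or_gt_of_ne hz0 with hzneg | hzpos
    · calc ∫ p, K1Uf f (p, z) ∂Q
          = ∫ x, (∫ y, K1Uf f ((x, y), z) ∂(νU.restrict (Ici (-1)))) ∂μ := integral_prod _ hz1
        _ = ∫ x, deriv f z * (if x < 0 then -BUmap νU (z / x) else 0) ∂μ := by
            refine integral_congr_ae (hxne.mono fun x hx => ?_)
            have e : (fun y => K1Uf f ((x, y), z))
                = fun y => deriv f z * (if |y| ≤ 1 then 0 else rho1 x (x * y) z) :=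
              funext fun y => by simp only [K1Uf]; split_ifs <;> simp
            dsimp only
            rw [e, integral_const_mul, E1U_neg νU hzneg]
        _ = deriv f z * kmu νU μ z := by
            rw [integral_const_mul]
            congr 1
            rw [kmu, if_neg (by linarith), if_pos hzneg]
            have e1 : (fun x => if x < 0 then -BUmap νU (z / x) else 0)
                = (Ico z (0 : ℝ)).indicator (fun x => -BUmap νU (z / x)) := by
              funext x
              by_cases h1 : x < 0
              · by_cases h2 : z ≤ x
                · simp [Set.indicator_apply, mem_Ico, h1, h2]
                · push_neg at h2
                  have hlt : z / x < 1 := by rw [div_lt_one_of_neg h1]; exact h2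
                  rw [if_pos h1, BUmap, if_neg (not_lt.mpr hlt.le),
                    Set.indicator_of_notMem (by simp [mem_Ico]; intro hc; linarith)]
                  ring
              · push_neg at h1
                rw [if_neg (not_lt.mpr h1),
                  Set.indicator_of_notMem (by simp [mem_Ico]; intro hc; linarith)]
            rw [e1, integral_indicator measurableSet_Ico, integral_neg]
    · calc ∫ p, K1Uf f (p, z) ∂Q
          = ∫ x, (∫ y, K1Uf f ((x, y), z) ∂(νU.restrict (Ici (-1)))) ∂μ := integral_prod _ hz1
        _ = ∫ x, deriv f z * (if 0 < x then BUmap νU (z / x) else 0) ∂μ := by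
            refine integral_congr_ae (hxne.mono fun x hx => ?_)
            have e : (fun y => K1Uf f ((x, y), z))
                = fun y => deriv f z * (if |y| ≤ 1 then 0 else rho1 x (x * y) z) :=
              funext fun y => by simp only [K1Uf]; split_ifs <;> simp
            dsimp only
            rw [e, integral_const_mul, E1U_pos νU hzpos]
        _ = deriv f z * kmu νU μ z := by
            rw [integral_const_mul]
            congr 1
            rw [kmu, if_pos hzpos]
            have e1 : (fun x => if 0 < x then BUmap νU (z / x) else 0)
                = (Ioc (0 : ℝ) z).indicator (fun x => BUmap νU (z / x)) := by
              funext x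
              by_cases h1 : 0 < x
              · by_cases h2 : x ≤ z
                · simp [Set.indicator_apply, mem_Ioc, h1, h2]
                · push_neg at h2
                  have hlt : z / x < 1 := (div_lt_one h1).mpr h2
                  rw [if_pos h1, BUmap, if_neg (not_lt.mpr hlt.le),
                    Set.indicator_of_notMem (by simp [mem_Ioc]; intro hc; linarith)]
              · push_neg at h1
                rw [if_neg (not_lt.mpr h1),
                  Set.indicator_of_notMem (by simp [mem_Ioc]; intro hc; linarith)]
            rw [e1, integral_indicator measurableSet_Ioc]
  have hZ2 : Integrable (fun z => ∫ p, K2Uf f (p, z) ∂Q) := by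
    simpa using hK2Q.swap.integral_prod_left
  have hZ1 : Integrable (fun z => ∫ p, K1Uf f (p, z) ∂Q) := by
    simpa using hK1Q.swap.integral_prod_left
  refine ⟨hgQ, hZ2.congr hid2, hZ1.congr hid1, ?_⟩
  calc ∫ p : ℝ × ℝ, (f (p.1 + p.1 * p.2) - f p.1
          - (if |p.2| ≤ 1 then p.1 * p.2 * deriv f p.1 else 0)) ∂Q
      = ∫ p, ((∫ z, K2Uf f (p, z)) + ∫ z, K1Uf f (p, z)) ∂Q :=
        integral_congr_ae (Eventually.of_forall hdecomp)
    _ = (∫ p, (∫ z, K2Uf f (p, z)) ∂Q) + ∫ p, (∫ z, K1Uf f (p, z)) ∂Q :=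
        integral_add hK2i hK1i
    _ = (∫ z, (∫ p, K2Uf f (p, z) ∂Q)) + ∫ z, (∫ p, K1Uf f (p, z) ∂Q) := by
        rw [hswap2, hswap1]
    _ = (∫ z, deriv (deriv f) z * rmu νU μ z) + ∫ z, deriv f z * kmu νU μ z := by
        rw [integral_congr_ae hid2, integral_congr_ae hid1]

end UPart
end KEFAux


namespace KEFAux

lemma g_bound {f : ℝ → ℝ} {M0 M2 : ℝ} (hf : ContDiff ℝ (⊤ : ℕ∞) f)
    (hM0 : ∀ z, |f z| ≤ M0) (hM2 : ∀ z, |deriv (deriv f) z| ≤ M2) (x y : ℝ) :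
    |f (x + y) - f x - (if |y| ≤ 1 then y * deriv f x else 0)|
      ≤ (2 * M0 + M2 / 2) * min 1 (y ^ 2) := by
  have hM0' : 0 ≤ M0 := le_trans (abs_nonneg _) (hM0 0)
  have hM2' : 0 ≤ M2 := le_trans (abs_nonneg _) (hM2 0)
  by_cases h : |y| ≤ 1
  · have hmin : min 1 (y ^ 2) = y ^ 2 := min_eq_right (by nlinarith [abs_nonneg y, sq_abs y])
    rw [if_pos h, ftc2 hf x y]
    calc |∫ z, deriv (deriv f) z * rho2 x y z|
        ≤ ∫ z, ‖deriv (deriv f) z * rho2 x y z‖ := by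
          rw [← Real.norm_eq_abs]; exact norm_integral_le_integral_norm _
      _ ≤ M2 * (y ^ 2 / 2) := integral_norm_mul_rho2_le (cont_deriv2 hf).measurable hM2 x y
      _ ≤ (2 * M0 + M2 / 2) * min 1 (y ^ 2) := by rw [hmin]; nlinarith [sq_nonneg y]
  · have hmin : min 1 (y ^ 2) = 1 := by
      push_neg at h
      exact min_eq_left (by nlinarith [abs_nonneg y, sq_abs y])
    rw [if_neg h, hmin, mul_one, sub_zero]
    calc |f (x + y) - f x| ≤ |f (x + y)| + |f x| := abs_sub _ _
      _ ≤ 2 * M0 + M2 / 2 := by linarith [hM0 (x + y), hM0 x]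

end KEFAux

open KEFAux

theorem stmt2 (ση2 γη σU2 γU : ℝ) (νη νU : Measure ℝ)
    (hση : 0 ≤ ση2) (hσU : 0 ≤ σU2)
    (hνη : IsLevyMeasure νη) (hνU : IsLevyMeasure νU)
    (hconc : νU (Iio (-1 : ℝ)) = 0)
    (μ : Measure ℝ) [IsProbabilityMeasure μ]
    (f : ℝ → ℝ) (hf : ContDiff ℝ (⊤ : ℕ∞) f) (hsupp : HasCompactSupport f) :
    (∀ x : ℝ, MeasureTheory.Integrable
        (fun y => f (x + y) - f x - (if |y| ≤ 1 then y * deriv f x else 0)) νη) ∧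
    (∀ x : ℝ, MeasureTheory.IntegrableOn
        (fun y => f (x + x * y) - f x - (if |y| ≤ 1 then x * y * deriv f x else 0))
        (Ici (-1 : ℝ)) νU) ∧
    MeasureTheory.Integrable (levyGen ση2 γη σU2 γU νη νU f) μ ∧
    MeasureTheory.Integrable (fun z => deriv (deriv f) z * (ση2 / 2 + z ^ 2 * σU2 / 2)) μ ∧
    MeasureTheory.Integrable
      (fun z => deriv (deriv f) z * (convM (Smap νη) μ z + rmu νU μ z)) ∧
    MeasureTheory.Integrable (fun z => deriv f z * (γη + z * γU)) μ ∧
    MeasureTheory.Integrable (fun z => deriv f z * convM (Bmap νη) μ z) ∧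
    MeasureTheory.Integrable (fun z => deriv f z * kmu νU μ z) ∧
    (∫ x, levyGen ση2 γη σU2 γU νη νU f x ∂μ) =
      (∫ z, deriv (deriv f) z * (ση2 / 2 + z ^ 2 * σU2 / 2) ∂μ)
        + (∫ z, deriv (deriv f) z * (convM (Smap νη) μ z + rmu νU μ z))
        + (∫ z, deriv f z * (γη + z * γU) ∂μ)
        + (∫ z, deriv f z * convM (Bmap νη) μ z)
        + ∫ z, deriv f z * kmu νU μ z := by
  classical
  -- bounds and support radius for f and its derivatives
  have hs1 : HasCompactSupport (deriv f) := hsupp.deriv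
  have hs2 : HasCompactSupport (deriv (deriv f)) := hs1.deriv
  obtain ⟨M0, hM0n⟩ := hsupp.exists_bound_of_continuous hf.continuous
  obtain ⟨M1, hM1n⟩ := hs1.exists_bound_of_continuous (cont_deriv hf)
  obtain ⟨M2, hM2n⟩ := hs2.exists_bound_of_continuous (cont_deriv2 hf)
  have hM0 : ∀ z, |f z| ≤ M0 := fun z => by simpa [Real.norm_eq_abs] using hM0n z
  have hM1 : ∀ z, |deriv f z| ≤ M1 := fun z => by simpa [Real.norm_eq_abs] using hM1n z
  have hM2 : ∀ z, |deriv (deriv f) z| ≤ M2 := fun z => by simpa [Real.norm_eq_abs] using hM2n z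
  have hcomp : IsCompact (tsupport f ∪ tsupport (deriv f) ∪ tsupport (deriv (deriv f))) :=
    (hsupp.union hs1).union hs2
  obtain ⟨r, hr⟩ := hcomp.isBounded.subset_closedBall 0
  set R := max r 1 with hRdef
  have hR1 : 1 ≤ R := le_max_right r 1
  have hout : ∀ z : ℝ, R < |z| →
      z ∉ tsupport f ∪ tsupport (deriv f) ∪ tsupport (deriv (deriv f)) := by
    intro z hz hc
    have := hr hc
    rw [Metric.mem_closedBall, Real.dist_eq, sub_zero] at this
    have : |z| ≤ R := le_trans this (le_max_left r 1)
    linarith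
  have hRf : ∀ z, R < |z| → f z = 0 := fun z hz =>
    image_eq_zero_of_notMem_tsupport (fun hc => hout z hz (Or.inl (Or.inl hc)))
  have hRf1 : ∀ z, R < |z| → deriv f z = 0 := fun z hz =>
    image_eq_zero_of_notMem_tsupport (fun hc => hout z hz (Or.inl (Or.inr hc)))
  have hRf2 : ∀ z, R < |z| → deriv (deriv f) z = 0 := fun z hz =>
    image_eq_zero_of_notMem_tsupport (fun hc => hout z hz (Or.inr hc))
  haveI : SigmaFinite νη := levy_sigmaFinite hνη
  haveI : SigmaFinite νU := levy_sigmaFinite hνU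
  -- master lemmas
  obtain ⟨hgP, hS, hB, hEqη⟩ := eta_part hf hM0 hM1 hM2 hR1 hRf1 μ νη hνη
  obtain ⟨hgQ, hSU, hBU, hEqU⟩ := U_part hf hM0 hM1 hM2 hR1 hRf hRf1 hRf2 μ νU hνU
  -- conjunct 1
  have conj1 : ∀ x : ℝ, MeasureTheory.Integrable
      (fun y => f (x + y) - f x - (if |y| ≤ 1 then y * deriv f x else 0)) νη := by
    intro x
    refine Integrable.mono' ((levy_integrable_min hνη).const_mul (2 * M0 + M2 / 2))
      ?_ (Eventually.of_forall fun y => ?_)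
    · refine (Measurable.sub (Measurable.sub ?_ measurable_const) ?_).aestronglyMeasurable
      · exact (hf.continuous.comp (continuous_const.add continuous_id)).measurable
      · exact Measurable.ite (measurableSet_le measurable_abs measurable_const)
          (measurable_id.mul measurable_const) measurable_const
    · rw [Real.norm_eq_abs]
      exact g_bound hf hM0 hM2 x y
  -- conjunct 2
  have conj2 : ∀ x : ℝ, MeasureTheory.IntegrableOn
      (fun y => f (x + x * y) - f x - (if |y| ≤ 1 then x * y * deriv f x else 0))
      (Ici (-1 : ℝ)) νU := by
    intro x
    refine Integrable.mono' (((levy_integrable_min hνU).restrict).const_mul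
      (6 * M0 + 2 * M2 * R ^ 2)) ?_ (Eventually.of_forall fun y => ?_)
    · refine (Measurable.sub (Measurable.sub ?_ measurable_const) ?_).aestronglyMeasurable
      · exact (hf.continuous.comp (continuous_const.add
          (continuous_const.mul continuous_id))).measurable
      · exact Measurable.ite (measurableSet_le measurable_abs measurable_const)
          ((measurable_const.mul measurable_id).mul measurable_const) measurable_const
    · rw [Real.norm_eq_abs]
      exact gU_bound hf hM0 hM2 hR1 hRf hRf1 x y
  -- the six pieces of levyGen
  have ha : Integrable (fun x => γη * deriv f x) μ :=
    ((cont_deriv hf).integrable_of_hasCompactSupport hs1).const_mul γη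
  have hb : Integrable (fun x => ση2 / 2 * deriv (deriv f) x) μ :=
    ((cont_deriv2 hf).integrable_of_hasCompactSupport hs2).const_mul (ση2 / 2)
  have hc : Integrable (fun x =>
      ∫ y, (f (x + y) - f x - (if |y| ≤ 1 then y * deriv f x else 0)) ∂νη) μ := by
    simpa using hgP.integral_prod_left
  have hxf' : Integrable (fun x => x * deriv f x) μ := by
    refine Continuous.integrable_of_hasCompactSupport (continuous_id.mul (cont_deriv hf)) ?_
    exact HasCompactSupport.mul_left hs1
  have hd : Integrable (fun x => γU * (x * deriv f x)) μ := hxf'.const_mul γU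
  have hx2f'' : Integrable (fun x => x ^ 2 * deriv (deriv f) x) μ := by
    refine Continuous.integrable_of_hasCompactSupport ((continuous_pow 2).mul (cont_deriv2 hf)) ?_
    exact HasCompactSupport.mul_left hs2
  have he : Integrable (fun x => σU2 / 2 * (x ^ 2 * deriv (deriv f) x)) μ := hx2f''.const_mul _
  have hc6 : Integrable (fun x => ∫ y in Ici (-1 : ℝ),
      (f (x + x * y) - f x - (if |y| ≤ 1 then x * y * deriv f x else 0)) ∂νU) μ := by
    simpa using hgQ.integral_prod_left
  -- conjunct 3 : levyGen integrable
  have conj3 : Integrable (levyGen ση2 γη σU2 γU νη νU f) μ := by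
    have := (((((ha.add hb).add hc).add hd).add he).add hc6)
    exact this
  -- conjunct 4
  have conj4 : Integrable (fun z => deriv (deriv f) z * (ση2 / 2 + z ^ 2 * σU2 / 2)) μ := by
    refine (hb.add he).congr (Eventually.of_forall fun z => ?_)
    simp only [Pi.add_apply]; ring
  -- conjunct 5
  have conj5 : Integrable (fun z => deriv (deriv f) z * (convM (Smap νη) μ z + rmu νU μ z)) := by
    refine (hS.add hSU).congr (Eventually.of_forall fun z => ?_)
    simp only [Pi.add_apply]; ring
  -- conjunct 6
  have conj6 : Integrable (fun z => deriv f z * (γη + z * γU)) μ := by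
    refine (ha.add hd).congr (Eventually.of_forall fun z => ?_)
    simp only [Pi.add_apply]; ring
  refine ⟨conj1, conj2, conj3, conj4, conj5, conj6, hB, hBU, ?_⟩
  -- now the identity
  have hsplitη : ∫ x, (∫ y, (f (x + y) - f x
        - (if |y| ≤ 1 then y * deriv f x else 0)) ∂νη) ∂μ
      = ∫ p : ℝ × ℝ, (f (p.1 + p.2) - f p.1
        - (if |p.2| ≤ 1 then p.2 * deriv f p.1 else 0)) ∂(μ.prod νη) :=
    (integral_prod _ hgP).symm
  have hsplitU : ∫ x, (∫ y in Ici (-1 : ℝ), (f (x + x * y) - f x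
        - (if |y| ≤ 1 then x * y * deriv f x else 0)) ∂νU) ∂μ
      = ∫ p : ℝ × ℝ, (f (p.1 + p.1 * p.2) - f p.1
        - (if |p.2| ≤ 1 then p.1 * p.2 * deriv f p.1 else 0))
        ∂(μ.prod (νU.restrict (Ici (-1)))) :=
    (integral_prod _ hgQ).symm
  have hLHS : ∫ x, levyGen ση2 γη σU2 γU νη νU f x ∂μ
      = (∫ x, γη * deriv f x ∂μ) + (∫ x, ση2 / 2 * deriv (deriv f) x ∂μ)
        + (∫ x, (∫ y, (f (x + y) - f x - (if |y| ≤ 1 then y * deriv f x else 0)) ∂νη) ∂μ)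
        + (∫ x, γU * (x * deriv f x) ∂μ)
        + (∫ x, σU2 / 2 * (x ^ 2 * deriv (deriv f) x) ∂μ)
        + ∫ x, (∫ y in Ici (-1 : ℝ),
            (f (x + x * y) - f x - (if |y| ≤ 1 then x * y * deriv f x else 0)) ∂νU) ∂μ := by
    have h2' : Integrable (fun x => γη * deriv f x + ση2 / 2 * deriv (deriv f) x) μ :=
      ha.add hb
    have h3' : Integrable (fun x => γη * deriv f x + ση2 / 2 * deriv (deriv f) x
        + ∫ y, (f (x + y) - f x - (if |y| ≤ 1 then y * deriv f x else 0)) ∂νη) μ := h2'.add hc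
    have h4' : Integrable (fun x => γη * deriv f x + ση2 / 2 * deriv (deriv f) x
        + (∫ y, (f (x + y) - f x - (if |y| ≤ 1 then y * deriv f x else 0)) ∂νη)
        + γU * (x * deriv f x)) μ := h3'.add hd
    have h5' : Integrable (fun x => γη * deriv f x + ση2 / 2 * deriv (deriv f) x
        + (∫ y, (f (x + y) - f x - (if |y| ≤ 1 then y * deriv f x else 0)) ∂νη)
        + γU * (x * deriv f x) + σU2 / 2 * (x ^ 2 * deriv (deriv f) x)) μ := h4'.add he
    simp only [levyGen]
    rw [integral_add h5' hc6, integral_add h4' he, integral_add h3' hd,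
      integral_add h2' hc, integral_add ha hb]
  have E1 : (∫ x, ση2 / 2 * deriv (deriv f) x ∂μ)
      + (∫ x, σU2 / 2 * (x ^ 2 * deriv (deriv f) x) ∂μ)
      = ∫ z, deriv (deriv f) z * (ση2 / 2 + z ^ 2 * σU2 / 2) ∂μ := by
    rw [← integral_add hb he]
    exact integral_congr_ae (Eventually.of_forall fun z => by simp only [Pi.add_apply]; ring)
  have E2 : (∫ x, γη * deriv f x ∂μ) + (∫ x, γU * (x * deriv f x) ∂μ)
      = ∫ z, deriv f z * (γη + z * γU) ∂μ := by
    rw [← integral_add ha hd]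
    exact integral_congr_ae (Eventually.of_forall fun z => by simp only [Pi.add_apply]; ring)
  have E5 : ∫ z, deriv (deriv f) z * (convM (Smap νη) μ z + rmu νU μ z)
      = (∫ z, deriv (deriv f) z * convM (Smap νη) μ z)
        + ∫ z, deriv (deriv f) z * rmu νU μ z := by
    rw [← integral_add hS hSU]
    exact integral_congr_ae (Eventually.of_forall fun z => by simp only [Pi.add_apply]; ring)
  rw [hLHS, hsplitη, hsplitU, hEqη, hEqU, E5]
  linarith [E1, E2]

end
end

section
/- Let G⁺ and G⁻ be locally finite Borel measures on ℝ (finite on compact sets). If ∫_ℝ f''(z) G⁺(dz) = ∫_ℝ f''(z) G⁻(dz) for every f ∈ C_c^∞(ℝ) (both integrals being finite), then there exist constants C₁, C₂ ∈ ℝ such that for every continuous compactly supported g: ℝ → ℝ, ∫_ℝ g(z) G⁺(dz) − ∫_ℝ g(z) G⁻(dz) = ∫_ℝ g(z) (C₁ z + C₂) dz. -/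
open MeasureTheory Set Filter
open scoped ContDiff Convolution Pointwise

noncomputable section

lemma aux_subset_Icc {s : Set ℝ} (hs : IsCompact s) : ∃ a b : ℝ, a < b ∧ s ⊆ Icc a b := by
  obtain ⟨r, hr⟩ := hs.isBounded.subset_closedBall 0
  refine ⟨-(|r| + 1), |r| + 1, by have := abs_nonneg r; linarith, hr.trans ?_⟩
  rw [Real.closedBall_eq_Icc]
  apply Icc_subset_Icc
  · simp only [zero_sub]
    have := le_abs_self r; linarith
  · have := le_abs_self r; linarith

lemma aux_integral_deriv_zero {u : ℝ → ℝ} (hu : Differentiable ℝ u)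
    (hc : Continuous (deriv u)) (hs : HasCompactSupport u) : ∫ x, deriv u x = 0 := by
  obtain ⟨a, b, hab, hsub⟩ := aux_subset_Icc hs
  have hsupp : Function.support (deriv u) ⊆ Icc a b := (support_deriv_subset).trans hsub
  have h1 : ∫ x, deriv u x = ∫ x in (a-1)..(b+1), deriv u x := by
    rw [intervalIntegral.integral_eq_integral_of_support_subset]
    exact hsupp.trans (fun x hx => ⟨by linarith [hx.1], by linarith [hx.2]⟩)
  rw [h1, intervalIntegral.integral_deriv_eq_sub (fun x _ => hu x)
    (hc.intervalIntegrable _ _)]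
  have hb : u (b+1) = 0 := image_eq_zero_of_notMem_tsupport (fun hmem => by
    have := (hsub hmem).2; linarith)
  have ha : u (a-1) = 0 := image_eq_zero_of_notMem_tsupport (fun hmem => by
    have := (hsub hmem).1; linarith)
  rw [ha, hb, sub_zero]

lemma aux_primitive {h : ℝ → ℝ} (hh : ContDiff ℝ (⊤ : ℕ∞) h) (hsupp : HasCompactSupport h)
    (hint : ∫ x, h x = 0) :
    ∃ F : ℝ → ℝ, ContDiff ℝ (⊤ : ℕ∞) F ∧ HasCompactSupport F ∧ deriv F = h ∧
      ∫ x, F x = - ∫ x, x * h x := by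
  obtain ⟨a, b, hab, hsub⟩ := aux_subset_Icc hsupp
  set F : ℝ → ℝ := fun x => ∫ t in (a-1)..x, h t with hF
  have hcont := hh.continuous
  have hFderiv : ∀ x, HasDerivAt F (h x) x := fun x =>
    intervalIntegral.integral_hasDerivAt_right (hcont.intervalIntegrable _ _)
      (hcont.stronglyMeasurableAtFilter _ _) hcont.continuousAt
  have hFdiff : Differentiable ℝ F := fun x => (hFderiv x).differentiableAt
  have hFd : deriv F = h := funext fun x => (hFderiv x).deriv
  have hFsmooth : ContDiff ℝ (⊤ : ℕ∞) F := by
    rw [show ((⊤ : ℕ∞) : WithTop ℕ∞) = ∞ from rfl, contDiff_infty_iff_deriv]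
    exact ⟨hFdiff, by rw [hFd]; exact hh⟩
  have hzero : ∀ x ∉ Icc (a-1) b, F x = 0 := by
    intro x hx
    rw [mem_Icc, not_and_or, not_le, not_le] at hx
    rcases hx with hx | hx
    · have : EqOn h 0 (uIcc (a-1) x) := by
        intro t ht
        rw [uIcc_of_ge hx.le] at ht
        refine image_eq_zero_of_notMem_tsupport (fun hmem => ?_)
        have h1 := (hsub hmem).1
        have := ht.2; linarith
      rw [hF]; simp only
      rw [intervalIntegral.integral_congr this]; simp
    · have : Function.support h ⊆ Ioc (a-1) x := by
        refine (subset_tsupport h).trans (hsub.trans (fun t ht => ⟨by linarith [ht.1], by linarith [ht.2]⟩))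
      rw [hF]; simp only
      rw [intervalIntegral.integral_eq_integral_of_support_subset this, hint]
  have hFsupp : HasCompactSupport F :=
    HasCompactSupport.intro isCompact_Icc hzero
  refine ⟨F, hFsmooth, hFsupp, hFd, ?_⟩
  have hGderiv : ∀ x, HasDerivAt (fun y => y * F y) (F x + x * h x) x := by
    intro x
    have := (hasDerivAt_id x).mul (hFderiv x)
    exact this.congr_deriv (by simp)
  have hGdiff : Differentiable ℝ (fun y => y * F y) := fun x => (hGderiv x).differentiableAt
  have hGd : deriv (fun y => y * F y) = fun x => F x + x * h x :=
    funext fun x => (hGderiv x).deriv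
  have hGsupp : HasCompactSupport (fun y => y * F y) := by
    exact (hFsupp.mul_left (f := fun y : ℝ => y))
  have h0 : ∫ x, (F x + x * h x) = 0 := by
    rw [← hGd]
    exact aux_integral_deriv_zero hGdiff (by rw [hGd]; exact hFdiff.continuous.add (continuous_id.mul hcont)) hGsupp
  have hFint : Integrable F volume := hFdiff.continuous.integrable_of_hasCompactSupport hFsupp
  have hxhint : Integrable (fun x => x * h x) volume :=
    (continuous_id.mul hcont).integrable_of_hasCompactSupport (hsupp.mul_left)
  rw [integral_add hFint hxhint] at h0
  linarith

def auxB : ContDiffBump (0 : ℝ) := ⟨1, 2, one_pos, one_lt_two⟩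
def auxχ : ℝ → ℝ := auxB.normed volume

lemma auxχ_smooth : ContDiff ℝ (⊤ : ℕ∞) auxχ := auxB.contDiff_normed
lemma auxχ_supp : HasCompactSupport auxχ := auxB.hasCompactSupport_normed
lemma auxχ_int : ∫ x, auxχ x = 1 := auxB.integral_normed
lemma auxχ_mom : ∫ x, x * auxχ x = 0 := by
  have h1 : ∫ x : ℝ, (-x) * auxχ (-x) = ∫ x, x * auxχ x :=
    integral_neg_eq_self (fun x => x * auxχ x) volume
  have h2 : ∀ x : ℝ, (-x) * auxχ (-x) = -(x * auxχ x) := by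
    intro x
    rw [show auxχ (-x) = auxχ x from auxB.normed_neg x]
    ring
  simp only [h2, integral_neg] at h1
  linarith

def auxψ : ℝ → ℝ := fun x => - deriv auxχ x

lemma auxχ_diff : Differentiable ℝ auxχ ∧ ContDiff ℝ (⊤ : ℕ∞) (deriv auxχ) := by
  have := contDiff_infty_iff_deriv.mp auxχ_smooth
  exact this

lemma auxψ_smooth : ContDiff ℝ (⊤ : ℕ∞) auxψ := auxχ_diff.2.neg
lemma auxψ_supp : HasCompactSupport auxψ := (auxχ_supp.deriv (𝕜 := ℝ)).neg
lemma auxψ_int : ∫ x, auxψ x = 0 := by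
  have := aux_integral_deriv_zero auxχ_diff.1 auxχ_diff.2.continuous auxχ_supp
  simp only [auxψ, integral_neg, this, neg_zero]
lemma auxψ_mom : ∫ x, x * auxψ x = 1 := by
  have hd : ∀ x, HasDerivAt (fun y => y * auxχ y) (auxχ x + x * deriv auxχ x) x := by
    intro x
    have h1 := (hasDerivAt_id x).mul (auxχ_diff.1 x).hasDerivAt
    exact h1.congr_deriv (by simp)
  have hGd : deriv (fun y => y * auxχ y) = fun x => auxχ x + x * deriv auxχ x :=
    funext fun x => (hd x).deriv
  have h0 : ∫ x, (auxχ x + x * deriv auxχ x) = 0 := by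
    rw [← hGd]
    exact aux_integral_deriv_zero (fun x => (hd x).differentiableAt)
      (by rw [hGd]; exact auxχ_smooth.continuous.add (continuous_id.mul auxχ_diff.2.continuous))
      (auxχ_supp.mul_left)
  have hint1 : Integrable auxχ volume :=
    auxχ_smooth.continuous.integrable_of_hasCompactSupport auxχ_supp
  have hint2 : Integrable (fun x => x * deriv auxχ x) volume :=
    (continuous_id.mul auxχ_diff.2.continuous).integrable_of_hasCompactSupport
      (auxχ_supp.deriv.mul_left)
  rw [integral_add hint1 hint2, auxχ_int] at h0
  have : ∀ x : ℝ, x * auxψ x = -(x * deriv auxχ x) := fun x => by simp only [auxψ]; ring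
  simp only [this, integral_neg]
  linarith

theorem stmt3 (Gp Gm : Measure ℝ)
    [IsFiniteMeasureOnCompacts Gp] [IsFiniteMeasureOnCompacts Gm]
    (h : ∀ f : ℝ → ℝ, ContDiff ℝ (⊤ : ℕ∞) f → HasCompactSupport f →
      MeasureTheory.Integrable (fun z => deriv (deriv f) z) Gp ∧
      MeasureTheory.Integrable (fun z => deriv (deriv f) z) Gm ∧
      (∫ z, deriv (deriv f) z ∂Gp) = ∫ z, deriv (deriv f) z ∂Gm) :
    ∃ C₁ C₂ : ℝ, ∀ g : ℝ → ℝ, Continuous g → HasCompactSupport g →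
      (∫ z, g z ∂Gp) - (∫ z, g z ∂Gm) = ∫ z, g z * (C₁ * z + C₂) := by
  set C₂ : ℝ := (∫ z, auxχ z ∂Gp) - (∫ z, auxχ z ∂Gm) with hC₂
  set C₁ : ℝ := (∫ z, auxψ z ∂Gp) - (∫ z, auxψ z ∂Gm) with hC₁
  refine ⟨C₁, C₂, ?_⟩
  set L : ℝ → ℝ := fun z => C₁ * z + C₂ with hL
  have hLc : Continuous L := by continuity
  -- the identity for smooth compactly supported functions
  have key : ∀ u : ℝ → ℝ, ContDiff ℝ (⊤ : ℕ∞) u → HasCompactSupport u →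
      (∫ z, u z ∂Gp) - (∫ z, u z ∂Gm) = ∫ z, u z * L z := by
    intro u hu hcu
    set c1 : ℝ := ∫ t, u t with hc1
    set c2 : ℝ := ∫ t, t * u t with hc2
    set h₀ : ℝ → ℝ := fun x => u x - c1 * auxχ x - c2 * auxψ x with hh₀
    have hsm : ContDiff ℝ (⊤ : ℕ∞) h₀ :=
      (hu.sub (contDiff_const.mul auxχ_smooth)).sub (contDiff_const.mul auxψ_smooth)
    have hcsupp : HasCompactSupport h₀ := by
      rw [hh₀]
      simp only [sub_eq_add_neg]
      exact (hcu.add ((auxχ_supp.mul_left).neg)).add ((auxψ_supp.mul_left).neg)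
    have Iu : Integrable u volume := hu.continuous.integrable_of_hasCompactSupport hcu
    have Ixu : Integrable (fun x => x * u x) volume :=
      (continuous_id.mul hu.continuous).integrable_of_hasCompactSupport hcu.mul_left
    have Iχ : Integrable auxχ volume :=
      auxχ_smooth.continuous.integrable_of_hasCompactSupport auxχ_supp
    have Ixχ : Integrable (fun x => x * auxχ x) volume :=
      (continuous_id.mul auxχ_smooth.continuous).integrable_of_hasCompactSupport auxχ_supp.mul_left
    have Iψ : Integrable auxψ volume :=
      auxψ_smooth.continuous.integrable_of_hasCompactSupport auxψ_supp
    have Ixψ : Integrable (fun x => x * auxψ x) volume :=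
      (continuous_id.mul auxψ_smooth.continuous).integrable_of_hasCompactSupport auxψ_supp.mul_left
    have I1 : Integrable (fun x => c1 * auxχ x) volume := Iχ.const_mul c1
    have I2 : Integrable (fun x => c2 * auxψ x) volume := Iψ.const_mul c2
    have I3 : Integrable (fun x => u x - c1 * auxχ x) volume := Iu.sub I1
    have hint0 : ∫ x, h₀ x = 0 := by
      simp only [hh₀]
      rw [integral_sub I3 I2, integral_sub Iu I1, integral_const_mul, integral_const_mul,
        auxχ_int, auxψ_int, ← hc1]
      ring
    have hmom0 : ∫ x, x * h₀ x = 0 := by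
      have hrw : (fun x => x * h₀ x)
          = fun x => x * u x - c1 * (x * auxχ x) - c2 * (x * auxψ x) := by
        funext x; simp only [hh₀]; ring
      have J1 : Integrable (fun x => c1 * (x * auxχ x)) volume := Ixχ.const_mul c1
      have J2 : Integrable (fun x => c2 * (x * auxψ x)) volume := Ixψ.const_mul c2
      have J3 : Integrable (fun x => x * u x - c1 * (x * auxχ x)) volume := Ixu.sub J1
      rw [hrw, integral_sub J3 J2, integral_sub Ixu J1, integral_const_mul, integral_const_mul,
        auxχ_mom, auxψ_mom, ← hc2]
      ring
    obtain ⟨F, hFs, hFc, hFd, hFint⟩ := aux_primitive hsm hcsupp hint0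
    have hFint0 : ∫ x, F x = 0 := by rw [hFint, hmom0, neg_zero]
    obtain ⟨f, hfs, hfc, hfd, -⟩ := aux_primitive hFs hFc hFint0
    obtain ⟨-, -, heq⟩ := h f hfs hfc
    simp only [hfd, hFd] at heq
    -- expand heq
    have IuGp : Integrable u Gp := hu.continuous.integrable_of_hasCompactSupport hcu
    have IuGm : Integrable u Gm := hu.continuous.integrable_of_hasCompactSupport hcu
    have IχGp : Integrable auxχ Gp :=
      auxχ_smooth.continuous.integrable_of_hasCompactSupport auxχ_supp
    have IχGm : Integrable auxχ Gm :=
      auxχ_smooth.continuous.integrable_of_hasCompactSupport auxχ_supp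
    have IψGp : Integrable auxψ Gp :=
      auxψ_smooth.continuous.integrable_of_hasCompactSupport auxψ_supp
    have IψGm : Integrable auxψ Gm :=
      auxψ_smooth.continuous.integrable_of_hasCompactSupport auxψ_supp
    have hexp : ∀ (μ : Measure ℝ), Integrable u μ → Integrable auxχ μ → Integrable auxψ μ →
        ∫ z, h₀ z ∂μ = (∫ z, u z ∂μ) - c1 * (∫ z, auxχ z ∂μ) - c2 * (∫ z, auxψ z ∂μ) := by
      intro μ h1 h2 h3
      have k1 : Integrable (fun x => c1 * auxχ x) μ := h2.const_mul c1
      have k2 : Integrable (fun x => c2 * auxψ x) μ := h3.const_mul c2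
      have k3 : Integrable (fun x => u x - c1 * auxχ x) μ := h1.sub k1
      simp only [hh₀]
      rw [integral_sub k3 k2, integral_sub h1 k1, integral_const_mul, integral_const_mul]
    rw [hexp Gp IuGp IχGp IψGp, hexp Gm IuGm IχGm IψGm] at heq
    -- compute the RHS volume integral
    have hrhs : ∫ z, u z * L z = c1 * C₂ + c2 * C₁ := by
      have hrw : (fun z => u z * L z) = fun z => C₁ * (z * u z) + C₂ * u z := by
        funext z; simp only [hL]; ring
      rw [hrw, integral_add ((Ixu.const_mul C₁)) (Iu.const_mul C₂),
        integral_const_mul, integral_const_mul, ← hc1, ← hc2]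
      ring
    rw [hrhs]
    rw [hC₁, hC₂]
    linarith
  -- now the general case by approximation
  intro g hgc hgs
  -- the compact set K
  set K : Set ℝ := Metric.closedBall (0 : ℝ) 1 + tsupport g with hK
  have hKc : IsCompact K := (isCompact_closedBall _ _).add hgs
  have htsub : tsupport g ⊆ K := by
    intro x hx
    have h0 : (0:ℝ) ∈ Metric.closedBall (0:ℝ) 1 := Metric.mem_closedBall_self zero_le_one
    have := Set.add_mem_add h0 hx
    simpa using this
  set M : ℝ := (Gp K).toReal + (Gm K).toReal + ∫ z, K.indicator (fun z => |L z|) z with hM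
  have hMnn : 0 ≤ M := by
    have h3 : 0 ≤ ∫ z, K.indicator (fun z => |L z|) z :=
      integral_nonneg (fun z => by
        by_cases hz : z ∈ K
        · simp [Set.indicator_of_mem hz, abs_nonneg]
        · simp [Set.indicator_of_notMem hz])
    have := ENNReal.toReal_nonneg (a := Gp K)
    have := ENNReal.toReal_nonneg (a := Gm K)
    linarith
  have main : ∀ ε : ℝ, 0 < ε →
      |((∫ z, g z ∂Gp) - (∫ z, g z ∂Gm)) - ∫ z, g z * L z| ≤ ε * M := by
    intro ε hε
    -- uniform continuity
    obtain ⟨δ, hδ, hδ'⟩ := Metric.uniformContinuous_iff.mp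
      (hgs.uniformContinuous_of_continuous hgc) ε hε
    set r : ℝ := min δ 1 with hr
    have hr0 : 0 < r := lt_min hδ one_pos
    set φ : ContDiffBump (0 : ℝ) := ⟨r/2, r, by linarith, by linarith⟩ with hφ
    set gδ : ℝ → ℝ := (φ.normed volume) ⋆[ContinuousLinearMap.lsmul ℝ ℝ, volume] g with hgδ
    have hgδ_smooth : ContDiff ℝ (⊤ : ℕ∞) gδ :=
      HasCompactSupport.contDiff_convolution_left _ φ.hasCompactSupport_normed
        φ.contDiff_normed (hgc.locallyIntegrable)
    have hgδ_supp_sub : Function.support gδ ⊆ K := by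
      refine (support_convolution_subset _).trans ?_
      rw [hK]
      apply Set.add_subset_add
      · rw [φ.support_normed_eq]
        exact Metric.ball_subset_closedBall.trans
          (Metric.closedBall_subset_closedBall (by simp [hφ, hr, min_le_right]))
      · exact subset_tsupport g
    have hgδ_supp : HasCompactSupport gδ :=
      HasCompactSupport.intro hKc (fun x hx => Function.notMem_support.mp
        (fun hmem => hx (hgδ_supp_sub hmem)))
    -- pointwise bound
    have hpt : ∀ x, |g x - gδ x| ≤ ε := by
      intro x
      have hball : ∀ y ∈ Metric.ball x φ.rOut, dist (g y) (g x) ≤ ε := by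
        intro y hy
        apply le_of_lt
        apply hδ'
        have : dist y x < r := by simpa [hφ] using hy
        exact lt_of_lt_of_le this (min_le_left _ _)
      have := φ.dist_normed_convolution_le (μ := volume) hgc.aestronglyMeasurable hball
      rw [Real.dist_eq] at this
      rw [abs_sub_comm]
      exact this
    have hzero_out : ∀ x ∉ K, g x - gδ x = 0 := by
      intro x hx
      have h1 : g x = 0 := image_eq_zero_of_notMem_tsupport (fun hmem => hx (htsub hmem))
      have h2 : gδ x = 0 := Function.notMem_support.mp (fun hmem => hx (hgδ_supp_sub hmem))
      rw [h1, h2, sub_zero]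
    -- key equality for gδ
    have hgδ_eq := key gδ hgδ_smooth hgδ_supp
    -- integrability
    have hgδc : Continuous gδ := hgδ_smooth.continuous
    have IgGp : Integrable g Gp := hgc.integrable_of_hasCompactSupport hgs
    have IgGm : Integrable g Gm := hgc.integrable_of_hasCompactSupport hgs
    have IgδGp : Integrable gδ Gp := hgδc.integrable_of_hasCompactSupport hgδ_supp
    have IgδGm : Integrable gδ Gm := hgδc.integrable_of_hasCompactSupport hgδ_supp
    have IgL : Integrable (fun z => g z * L z) volume :=
      (hgc.mul hLc).integrable_of_hasCompactSupport (hgs.mul_right)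
    have IgδL : Integrable (fun z => gδ z * L z) volume :=
      (hgδc.mul hLc).integrable_of_hasCompactSupport (hgδ_supp.mul_right)
    -- difference representation
    have hdiff_eq : ((∫ z, g z ∂Gp) - (∫ z, g z ∂Gm)) - ∫ z, g z * L z
        = (∫ z, (g z - gδ z) ∂Gp) - (∫ z, (g z - gδ z) ∂Gm)
          - ∫ z, (g z - gδ z) * L z := by
      rw [integral_sub IgGp IgδGp, integral_sub IgGm IgδGm]
      have hsubL : (fun z => (g z - gδ z) * L z) = fun z => g z * L z - gδ z * L z := by
        funext z; ring
      rw [hsubL, integral_sub IgL IgδL]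
      linarith [hgδ_eq]
    -- bounds
    have bound_meas : ∀ (μ : Measure ℝ), IsFiniteMeasureOnCompacts μ →
        ‖∫ z, (g z - gδ z) ∂μ‖ ≤ ε * (μ K).toReal := by
      intro μ hμ
      have hdom : Integrable (K.indicator (fun _ => ε)) μ :=
        (integrable_indicator_iff hKc.measurableSet).mpr
          (integrableOn_const hKc.measure_lt_top.ne)
      have hb : ∀ x, ‖g x - gδ x‖ ≤ K.indicator (fun _ => ε) x := by
        intro x
        by_cases hx : x ∈ K
        · rw [Set.indicator_of_mem hx]
          exact hpt x
        · rw [Set.indicator_of_notMem hx, hzero_out x hx]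
          simp
      calc ‖∫ z, (g z - gδ z) ∂μ‖ ≤ ∫ z, K.indicator (fun _ => ε) z ∂μ :=
            norm_integral_le_of_norm_le hdom (ae_of_all _ hb)
        _ = (μ K).toReal • ε := integral_indicator_const ε hKc.measurableSet
        _ = ε * (μ K).toReal := by rw [smul_eq_mul]; ring
    have bound_vol : ‖∫ z, (g z - gδ z) * L z‖ ≤ ε * ∫ z, K.indicator (fun z => |L z|) z := by
      have hdom : Integrable (K.indicator (fun z => ε * |L z|)) volume :=
        (integrable_indicator_iff hKc.measurableSet).mpr
          ((continuous_const.mul hLc.abs).continuousOn.integrableOn_compact hKc)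
      have hb : ∀ x, ‖(g x - gδ x) * L x‖ ≤ K.indicator (fun z => ε * |L z|) x := by
        intro x
        by_cases hx : x ∈ K
        · rw [Set.indicator_of_mem hx, norm_mul]
          exact mul_le_mul_of_nonneg_right (hpt x) (abs_nonneg _)
        · rw [Set.indicator_of_notMem hx, hzero_out x hx]
          simp
      calc ‖∫ z, (g z - gδ z) * L z‖ ≤ ∫ z, K.indicator (fun z => ε * |L z|) z :=
            norm_integral_le_of_norm_le hdom (ae_of_all _ hb)
        _ = ∫ z, ε * K.indicator (fun z => |L z|) z := by
            congr 1; funext z; exact Set.indicator_const_mul K _ ε z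
        _ = ε * ∫ z, K.indicator (fun z => |L z|) z := integral_const_mul ε _
    rw [hdiff_eq, hM]
    have b1 := bound_meas Gp inferInstance
    have b2 := bound_meas Gm inferInstance
    have b3 := bound_vol
    rw [Real.norm_eq_abs] at b1 b2 b3
    calc |(∫ z, (g z - gδ z) ∂Gp) - (∫ z, (g z - gδ z) ∂Gm) - ∫ z, (g z - gδ z) * L z|
        ≤ |(∫ z, (g z - gδ z) ∂Gp)| + |(∫ z, (g z - gδ z) ∂Gm)| + |∫ z, (g z - gδ z) * L z| := by
          have := abs_sub (((∫ z, (g z - gδ z) ∂Gp) - (∫ z, (g z - gδ z) ∂Gm)))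
            (∫ z, (g z - gδ z) * L z)
          have h2 := abs_sub (∫ z, (g z - gδ z) ∂Gp) (∫ z, (g z - gδ z) ∂Gm)
          calc |(∫ z, (g z - gδ z) ∂Gp) - (∫ z, (g z - gδ z) ∂Gm) - ∫ z, (g z - gδ z) * L z|
              ≤ |(∫ z, (g z - gδ z) ∂Gp) - (∫ z, (g z - gδ z) ∂Gm)| + |∫ z, (g z - gδ z) * L z| :=
                abs_sub _ _
            _ ≤ _ := by linarith [abs_sub (∫ z, (g z - gδ z) ∂Gp) (∫ z, (g z - gδ z) ∂Gm)]
      _ ≤ ε * (Gp K).toReal + ε * (Gm K).toReal + ε * ∫ z, K.indicator (fun z => |L z|) z := by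
          linarith
      _ = ε * ((Gp K).toReal + (Gm K).toReal + ∫ z, K.indicator (fun z => |L z|) z) := by ring
  -- conclude
  set A : ℝ := ((∫ z, g z ∂Gp) - (∫ z, g z ∂Gm)) - ∫ z, g z * L z with hA
  have hA0 : A = 0 := by
    by_contra hne
    have habs : 0 < |A| := abs_pos.mpr hne
    have hε : 0 < |A| / (2 * (M + 1)) := by positivity
    have := main _ hε
    have hMle : M < M + 1 := by linarith
    have hpos : 0 < 2 * (M + 1) := by linarith
    have h2 : |A| / (2 * (M + 1)) * M < |A| := by
      rw [div_mul_eq_mul_div, div_lt_iff₀ hpos]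
      nlinarith [mul_pos habs (show (0:ℝ) < M + 2 by linarith)]
    linarith
  rw [hA] at hA0
  have : (∫ z, g z ∂Gp) - (∫ z, g z ∂Gm) = ∫ z, g z * L z := by linarith [hA0]
  exact this

end
end

section
/- Let μ(dx) = (1/2) e^{−|x|} dx be the standard Laplace distribution. Then for every v > 0: −∫_v^∞ (1/2) e^{−|x|} dx + (1/v) ∫₀^v e^{−(v−x)} (1/2) e^{−|x|} dx + (1/v) ∫_v^∞ e^{−(x−v)} (1/2) e^{−|x|} dx − ∫_v^∞ w^{−2} ( ∫₀^w e^{−(w−x)} (1/2) e^{−|x|} dx + ∫_w^∞ e^{−(x−w)} (1/2) e^{−|x|} dx ) dw = −(1/4) ∫_v^∞ e^{−w} / w dw, and this quantity is strictly negative. (Hence the distributional equation (2.3) of Kuznetsov–Pardo–Savov fails for the Laplace distribution, which is the law of the exponential functional ∫₀^∞ e^{−s} dη_s with ν_η(dx) = e^{−|x|} dx.) -/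
open MeasureTheory Set Filter

noncomputable section

lemma lemC (v : ℝ) (hv : 0 < v) :
    (∫ x in Ioi v, (1 / 2 : ℝ) * Real.exp (-|x|)) = Real.exp (-v) / 2 := by
  rw [setIntegral_congr_fun measurableSet_Ioi
    (fun x (hx : x ∈ Ioi v) => by simp only [abs_of_pos (hv.trans hx)] :
      EqOn (fun x => (1/2 : ℝ) * Real.exp (-|x|)) (fun x => (1/2 : ℝ) * Real.exp (-x)) (Ioi v))]
  rw [integral_const_mul, integral_exp_neg_Ioi]
  ring

lemma lemB (w : ℝ) (hw : 0 < w) :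
    (∫ x in (0:ℝ)..w, Real.exp (-(w - x)) * ((1 / 2) * Real.exp (-|x|)))
      = w / 2 * Real.exp (-w) := by
  rw [intervalIntegral.integral_congr (g := fun _ => (1/2 : ℝ) * Real.exp (-w))
    (by
      intro x hx
      rw [uIcc_of_le hw.le] at hx
      simp only [abs_of_nonneg hx.1]
      rw [show Real.exp (-(w - x)) * ((1/2) * Real.exp (-x))
          = (1/2) * (Real.exp (-(w-x)) * Real.exp (-x)) by ring, ← Real.exp_add]
      congr 2
      ring)]
  simp
  ring

lemma lemA (w : ℝ) (hw : 0 < w) :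
    (∫ x in Ioi w, Real.exp (-(x - w)) * ((1 / 2) * Real.exp (-|x|)))
      = Real.exp (-w) / 4 := by
  have h2 : (∫ x in Ioi w, Real.exp (-(2*x))) = Real.exp (-(2*w)) / 2 := by
    have key := integral_Ioi_of_hasDerivAt_of_tendsto' (a := w)
      (f := fun x => -(Real.exp (-(2*x)) / 2)) (f' := fun x => Real.exp (-(2*x)))
      (fun x _ => by
        have h : HasDerivAt (fun y : ℝ => -(2*y)) (-2) x := by
          simpa using ((hasDerivAt_id x).const_mul (2:ℝ)).fun_neg
        have h' := (h.exp.div_const 2).fun_neg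
        convert h' using 1
        ring)
      (by simpa using exp_neg_integrableOn_Ioi w (by norm_num : (0:ℝ) < 2))
      (by
        have h1 : Tendsto (fun x:ℝ => 2*x) atTop atTop :=
          tendsto_id.const_mul_atTop two_pos
        have h3 := ((Real.tendsto_exp_neg_atTop_nhds_zero.comp h1).div_const 2).neg
        simpa [Function.comp] using h3)
    rw [key]
    ring
  rw [setIntegral_congr_fun measurableSet_Ioi
    (fun x (hx : x ∈ Ioi w) => by
      simp only [abs_of_pos (hw.trans hx)]
      rw [show Real.exp (-(x - w)) * ((1/2) * Real.exp (-x))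
          = (1/2) * (Real.exp (-(x-w)) * Real.exp (-x)) by ring, ← Real.exp_add,
        show -(x-w) + -x = w + -(2*x) by ring, Real.exp_add]
      ring :
      EqOn _ (fun x => (Real.exp w / 2) * Real.exp (-(2*x))) (Ioi w))]
  rw [integral_const_mul, h2, show -(2*w) = -w + -w by ring, Real.exp_add, Real.exp_neg]
  field_simp
  ring

lemma intOn (v : ℝ) (hv : 0 < v) (n : ℕ) :
    IntegrableOn (fun w => Real.exp (-w) / w ^ n) (Ioi v) := by
  have hexp : IntegrableOn (fun w => Real.exp (-w) / v ^ n) (Ioi v) := by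
    have := (exp_neg_integrableOn_Ioi v (by norm_num : (0:ℝ) < 1)).div_const (v ^ n)
    simp only [neg_mul, one_mul] at this
    exact this
  refine Integrable.mono' hexp ?_ ?_
  · exact (Measurable.div (by fun_prop) (by fun_prop) :
      Measurable fun w : ℝ => Real.exp (-w) / w ^ n).aestronglyMeasurable
  · filter_upwards [ae_restrict_mem measurableSet_Ioi] with w hw
    have hwpos : 0 < w := hv.trans hw
    rw [Real.norm_eq_abs, abs_of_nonneg (by positivity)]
    apply div_le_div_of_nonneg_left (Real.exp_pos _).le (by positivity)
    exact pow_le_pow_left₀ hv.le (le_of_lt hw) n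

lemma keyint (v : ℝ) (hv : 0 < v) :
    (∫ w in Ioi v, (Real.exp (-w) / (4*w) + Real.exp (-w) / (4*w^2)))
      = Real.exp (-v) / (4*v) := by
  have key := integral_Ioi_of_hasDerivAt_of_tendsto' (a := v)
    (f := fun w => -(Real.exp (-w) / (4*w)))
    (f' := fun w => Real.exp (-w) / (4*w) + Real.exp (-w) / (4*w^2))
    (fun x hx => by
      have hx0 : x ≠ 0 := (lt_of_lt_of_le hv hx).ne'
      have h1 : HasDerivAt (fun y : ℝ => Real.exp (-y)) (-Real.exp (-x)) x := by
        simpa using ((hasDerivAt_id x).neg.exp)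
      have h2 : HasDerivAt (fun y : ℝ => 4*y) 4 x := by
        simpa using (hasDerivAt_id x).const_mul (4:ℝ)
      have h3 := (h1.fun_div h2 (by positivity)).fun_neg
      convert h3 using 1
      field_simp
      ring)
    (by
      apply IntegrableOn.congr_fun
        (((intOn v hv 1).const_mul (1/4)).add ((intOn v hv 2).const_mul (1/4)))
      · intro w _
        simp only [Pi.add_apply, pow_one]
        ring
      · exact measurableSet_Ioi)
    (by
      have h1 : Tendsto (fun w : ℝ => (4*w)⁻¹) atTop (nhds 0) := by
        apply Tendsto.comp tendsto_inv_atTop_zero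
        exact tendsto_id.const_mul_atTop (by norm_num)
      have h2 := (Real.tendsto_exp_neg_atTop_nhds_zero.mul h1).neg
      simpa [div_eq_mul_inv] using h2)
  rw [key]
  ring

lemma Jpos (v : ℝ) (hv : 0 < v) : 0 < ∫ w in Ioi v, Real.exp (-w) / w := by
  have hint : IntegrableOn (fun w => Real.exp (-w) / w) (Ioi v) := by
    simpa using intOn v hv 1
  rw [setIntegral_pos_iff_support_of_nonneg_ae
    (by
      filter_upwards [ae_restrict_mem measurableSet_Ioi] with w hw
      have : 0 < w := hv.trans hw
      positivity) hint]
  have hsub : Ioi v ⊆ Function.support (fun w => Real.exp (-w) / w) ∩ Ioi v := by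
    intro w hw
    have hwpos : 0 < w := hv.trans hw
    exact ⟨by simp [Function.mem_support]; positivity, hw⟩
  calc (0:ENNReal) < volume (Ioi v) := by simp [Real.volume_Ioi]
    _ ≤ _ := measure_mono hsub

theorem stmt14 :
    ∀ v : ℝ, 0 < v →
      ((-(∫ x in Ioi v, (1 / 2) * Real.exp (-|x|))
          + (1 / v) * (∫ x in (0 : ℝ)..v, Real.exp (-(v - x)) * ((1 / 2) * Real.exp (-|x|)))
          + (1 / v) * (∫ x in Ioi v, Real.exp (-(x - v)) * ((1 / 2) * Real.exp (-|x|)))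
          - ∫ w in Ioi v,
              ((∫ x in (0 : ℝ)..w, Real.exp (-(w - x)) * ((1 / 2) * Real.exp (-|x|)))
                + ∫ x in Ioi w, Real.exp (-(x - w)) * ((1 / 2) * Real.exp (-|x|))) / w ^ 2)
        = -(1 / 4) * ∫ w in Ioi v, Real.exp (-w) / w) ∧
      -(1 / 4) * (∫ w in Ioi v, Real.exp (-w) / w) < 0 := by
  intro v hv
  constructor
  · have hbig : (∫ w in Ioi v,
        ((∫ x in (0 : ℝ)..w, Real.exp (-(w - x)) * ((1 / 2) * Real.exp (-|x|)))
          + ∫ x in Ioi w, Real.exp (-(x - w)) * ((1 / 2) * Real.exp (-|x|))) / w ^ 2)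
        = (1/4) * (∫ w in Ioi v, Real.exp (-w) / w) + Real.exp (-v) / (4*v) := by
      rw [setIntegral_congr_fun measurableSet_Ioi
        (fun w (hw : w ∈ Ioi v) => by
          have hwpos : 0 < w := hv.trans hw
          simp only
          rw [lemB w hwpos, lemA w hwpos]
          field_simp
          ring :
          EqOn _ (fun w => Real.exp (-w) / (4*w)
            + (Real.exp (-w) / (4*w) + Real.exp (-w) / (4*w^2))) (Ioi v))]
      rw [integral_add]
      · rw [keyint v hv]
        congr 1
        rw [← integral_const_mul]
        apply setIntegral_congr_fun measurableSet_Ioi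
        intro w _
        simp only
        ring
      · apply IntegrableOn.congr_fun ((intOn v hv 1).const_mul (1/4)) _ measurableSet_Ioi
        intro w _
        simp only [pow_one]
        ring
      · apply IntegrableOn.congr_fun
          (((intOn v hv 1).const_mul (1/4)).add ((intOn v hv 2).const_mul (1/4)))
          _ measurableSet_Ioi
        intro w _
        simp only [Pi.add_apply, pow_one]
        ring
    rw [hbig, lemC v hv, lemB v hv, lemA v hv]
    field_simp
    ring
  · have := Jpos v hv
    nlinarith

end
end
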